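/- arXiv:0904.2448 — 4 statements merged into one kernel-verified Lean document; each statement's English description precedes it below -/
import Mathlib

section
/- If an evolutionary network contains a hybrid node h and two non-trivial paths v1⇝h and v2⇝h that share only their end h, then either v1 and v2 are both intermediate nodes of a single reticulation cycle for h, or one of v1, v2 is an intermediate node of a reticulation cycle for h whose split node is a descendant of the other node. -/
/-- An evolutionary network: a rooted directed acyclic graph. -/
structure EvoNet (V : Type*) where
  arc : V → V → Prop
  root : V
  acyclic : ∀ v : V, ¬ Relation.TransGen arc v v
  rooted : ∀ v : V, Relation.ReflTransGen arc root v

namespace EvoNet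

variable {V : Type*}

/-- A hybrid node: in-degree at least 2. -/
def IsHybrid (N : EvoNet V) (v : V) : Prop :=
  ∃ u w : V, u ≠ w ∧ N.arc u v ∧ N.arc w v

/-- A tree node: in-degree at most 1. -/
def IsTreeNode (N : EvoNet V) (v : V) : Prop := ¬ N.IsHybrid v

/-- A (directed) path, given as its nonempty list of nodes. -/
def IsPath (N : EvoNet V) (p : List V) : Prop := p ≠ [] ∧ p.Chain' N.arc

/-- The intermediate (non-endpoint) nodes of a path. -/
def interm (p : List V) : Set V := {x | x ∈ (p.drop 1).dropLast}

/-- A reticulation cycle for the hybrid node `hend`: a pair of internally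
disjoint nontrivial paths with the same origin (the split node), both ending
in `hend`. -/
structure RetCycle (N : EvoNet V) where
  hend : V
  p : List V
  q : List V
  isPath_p : N.IsPath p
  isPath_q : N.IsPath q
  len_p : 2 ≤ p.length
  len_q : 2 ≤ q.length
  same_origin : p.head? = q.head?
  last_p : p.getLast? = some hend
  last_q : q.getLast? = some hend
  hybrid : N.IsHybrid hend
  intDisjoint : ∀ x : V, x ∈ interm p → x ∉ interm q
  ne : p ≠ q

/-- The nodes of a reticulation cycle. -/
def RetCycle.nodes {N : EvoNet V} (c : RetCycle N) : Set V :=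
  {x | x ∈ c.p ∨ x ∈ c.q}

/-- The arcs of a reticulation cycle. -/
def RetCycle.arcs {N : EvoNet V} (c : RetCycle N) : Set (V × V) :=
  {e | e ∈ c.p.zip c.p.tail ∨ e ∈ c.q.zip c.q.tail}

/-- The intermediate nodes of a reticulation cycle. -/
def RetCycle.intermNodes {N : EvoNet V} (c : RetCycle N) : Set V :=
  interm c.p ∪ interm c.q

/-- `s` is the split node of the reticulation cycle `c`. -/
def RetCycle.SplitIs {N : EvoNet V} (c : RetCycle N) (s : V) : Prop :=
  c.p.head? = some s

/-- Two reticulation cycles are the same (as unordered pairs of merge paths). -/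
def RetCycle.Equiv {N : EvoNet V} (c₁ c₂ : RetCycle N) : Prop :=
  (c₁.p = c₂.p ∧ c₁.q = c₂.q) ∨ (c₁.p = c₂.q ∧ c₁.q = c₂.p)

/-- 1-nested: no node is intermediate in reticulation cycles for two
different hybrid nodes. -/
def OneNested (N : EvoNet V) : Prop :=
  ∀ c₁ c₂ : RetCycle N, c₁.hend ≠ c₂.hend →
    ∀ x : V, x ∈ c₁.intermNodes → x ∉ c₂.intermNodes

/-- Galled tree: distinct reticulation cycles have disjoint node sets. -/
def Galled (N : EvoNet V) : Prop :=
  ∀ c₁ c₂ : RetCycle N, ¬ c₁.Equiv c₂ → Disjoint c₁.nodes c₂.nodes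

/-- Weakly galled tree: distinct reticulation cycles have disjoint arc sets. -/
def WeaklyGalled (N : EvoNet V) : Prop :=
  ∀ c₁ c₂ : RetCycle N, ¬ c₁.Equiv c₂ → Disjoint c₁.arcs c₂.arcs

/-- 2-hybrid: every hybrid node has in-degree exactly 2. -/
def TwoHybrid (N : EvoNet V) : Prop :=
  ∀ v : V, N.IsHybrid v →
    ∃ u w : V, u ≠ w ∧ N.arc u v ∧ N.arc w v ∧ ∀ z : V, N.arc z v → z = u ∨ z = w

/-- Hybrid-1: every hybrid node has out-degree exactly 1. -/
def HybridOne (N : EvoNet V) : Prop :=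
  ∀ v : V, N.IsHybrid v → ∃! w : V, N.arc v w

/-- Semibinary: hybrid nodes have in-degree 2 and out-degree 1. -/
def Semibinary (N : EvoNet V) : Prop := N.TwoHybrid ∧ N.HybridOne

/-- Node of out-degree exactly 2. -/
def OutDegTwo (N : EvoNet V) (v : V) : Prop :=
  ∃ u w : V, u ≠ w ∧ N.arc v u ∧ N.arc v w ∧ ∀ z : V, N.arc v z → z = u ∨ z = w

/-- An internal (non-leaf) node. -/
def IsInternal (N : EvoNet V) (v : V) : Prop := ∃ w : V, N.arc v w

/-- Binary (fully resolved): semibinary and internal tree nodes have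
out-degree 2. -/
def Binary (N : EvoNet V) : Prop :=
  N.Semibinary ∧ ∀ v : V, N.IsTreeNode v → N.IsInternal v → N.OutDegTwo v

/-- Undirected adjacency induced by a set of arcs. -/
def uadj (A : Set (V × V)) (x y : V) : Prop := (x, y) ∈ A ∨ (y, x) ∈ A

/-- The vertices of a subgraph given by a set of arcs. -/
def everts (A : Set (V × V)) : Set V := {x | ∃ y : V, (x, y) ∈ A ∨ (y, x) ∈ A}

/-- Connectedness of the underlying undirected graph of a set of arcs. -/
def EConnected (A : Set (V × V)) : Prop :=
  ∀ x y : V, x ∈ everts A → y ∈ everts A → Relation.ReflTransGen (uadj A) x y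

/-- Remove a node and all arcs incident to it. -/
def avoid (A : Set (V × V)) (v : V) : Set (V × V) :=
  {e ∈ A | e.1 ≠ v ∧ e.2 ≠ v}

/-- A biconnected subgraph of a network: a set of arcs of the network whose
underlying undirected graph is connected and remains connected after the
removal of any single node (with all arcs incident to it). -/
def Biconnected (N : EvoNet V) (A : Set (V × V)) : Prop :=
  (∀ e ∈ A, N.arc e.1 e.2) ∧ EConnected A ∧ ∀ v : V, EConnected (avoid A v)

/-- Level-1: no biconnected subgraph contains more than one hybrid node. -/
def LevelOne (N : EvoNet V) : Prop :=
  ∀ A : Set (V × V), N.Biconnected A →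
    ∀ h₁ h₂ : V, N.IsHybrid h₁ → N.IsHybrid h₂ →
      h₁ ∈ everts A → h₂ ∈ everts A → h₁ = h₂

/-- `v` is a descendant of `u`. -/
def Desc (N : EvoNet V) (u v : V) : Prop := Relation.ReflTransGen N.arc u v

/-- `v` is a proper descendant of `u`. -/
def ProperDesc (N : EvoNet V) (u v : V) : Prop := Relation.TransGen N.arc u v

/-- `w` is a minimal common ancestor of `u` and `v`: a common ancestor that is
a proper ancestor of no other common ancestor of them. -/
def IsMCA (N : EvoNet V) (w u v : V) : Prop :=
  N.Desc w u ∧ N.Desc w v ∧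
    ∀ z : V, N.Desc z u → N.Desc z v → ¬ N.ProperDesc w z

end EvoNet

namespace GL2

variable {V : Type*} {r : V → V → Prop}

lemma chain'_getElem {l : List V} (hc : l.Chain' r) (i : ℕ) (hi : i + 1 < l.length) :
    r l[i] l[i+1] := by
  have := List.isChain_iff_getElem.mp hc i (by omega)
  simpa using this

lemma chain'_rtg {l : List V} (hc : l.Chain' r) {i j : ℕ} (hij : i ≤ j) (hj : j < l.length) :
    Relation.ReflTransGen r (l[i]'(by omega)) (l[j]'hj) := by
  induction j with
  | zero =>
    obtain rfl : i = 0 := by omega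
    exact Relation.ReflTransGen.refl
  | succ j ih =>
    rcases Nat.lt_or_ge i (j+1) with hlt | hge
    · exact Relation.ReflTransGen.tail (ih (by omega) (by omega)) (chain'_getElem hc j hj)
    · obtain rfl : i = j + 1 := by omega
      exact Relation.ReflTransGen.refl

lemma chain'_tg {l : List V} (hc : l.Chain' r) {i j : ℕ} (hij : i < j) (hj : j < l.length) :
    Relation.TransGen r (l[i]'(by omega)) (l[j]'hj) := by
  have hstep : r (l[j-1]'(by omega)) (l[j]'hj) := by
    have := chain'_getElem hc (j-1) (by omega)
    have hjj : j - 1 + 1 = j := by omega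
    convert this using 2 <;> omega
  exact Relation.TransGen.tail' (chain'_rtg hc (show i ≤ j - 1 by omega) (by omega)) hstep

lemma chain'_inj {l : List V} (hc : l.Chain' r) (ha : ∀ v, ¬ Relation.TransGen r v v)
    {i j : ℕ} (hi : i < l.length) (hj : j < l.length) (hij : l[i] = l[j]) : i = j := by
  rcases lt_trichotomy i j with hlt | heq | hgt
  · exact absurd (hij ▸ chain'_tg hc hlt hj) (ha _)
  · exact heq
  · exact absurd (hij ▸ chain'_tg hc hgt hi) (ha _)

lemma exists_prefix {a b : V} (hab : Relation.ReflTransGen r a b) {p : List V}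
    (hp : p.Chain' r) (hhd : p.head? = some b) :
    ∃ l : List V, (l ++ p).Chain' r ∧ (l ++ p).head? = some a := by
  induction hab using Relation.ReflTransGen.head_induction_on with
  | refl => exact ⟨[], by simpa, by simpa⟩
  | head h' hcb ih =>
    obtain ⟨l, hl, hlh⟩ := ih
    rename_i a c
    refine ⟨a :: l, ?_, ?_⟩
    · show List.Chain' r (a :: (l ++ p))
      refine hl.cons ?_
      intro y hy
      rw [hlh] at hy
      simp only [Option.mem_def, Option.some.injEq] at hy
      subst hy
      exact h'
    · simp

lemma gec {l : List V} {i j : ℕ} (h : i = j) (hi : i < l.length) :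
    l[i]'hi = l[j]'(h ▸ hi) := by subst h; rfl

lemma chain'_drop {l : List V} (hc : l.Chain' r) (i : ℕ) : (l.drop i).Chain' r := by
  rw [List.Chain', List.isChain_iff_getElem] at hc ⊢
  intro t ht
  simp only [List.get_eq_getElem, List.getElem_drop]
  have hl : t < l.length - i - 1 := by
    have := ht; rw [List.length_drop] at this; omega
  have := hc (i + t) (by omega)
  exact this

lemma getLast?_drop {l : List V} {i : ℕ} (hi : i < l.length) :
    (l.drop i).getLast? = l.getLast? := by
  have h1 : (l.drop i).length - 1 < (l.drop i).length := by rw [List.length_drop]; omega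
  rw [List.getLast?_eq_getElem?, List.getLast?_eq_getElem?,
      List.getElem?_eq_getElem h1,
      List.getElem?_eq_getElem (show l.length - 1 < l.length by omega)]
  congr 1
  rw [List.getElem_drop]
  exact gec (by rw [List.length_drop]; omega) _

lemma mem_interm {l : List V} {i k : ℕ} (hik : i < k) (hk : k + 1 < l.length) :
    l[k] ∈ EvoNet.interm (l.drop i) := by
  simp only [EvoNet.interm, Set.mem_setOf_eq, List.drop_drop]
  rw [List.mem_iff_getElem]
  refine ⟨k - (i+1), by simp [List.length_dropLast, List.length_drop]; omega, ?_⟩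
  rw [List.getElem_dropLast, List.getElem_drop]
  congr 1
  omega

lemma interm_spec {l : List V} {i : ℕ} {x : V} (hx : x ∈ EvoNet.interm (l.drop i)) :
    ∃ k, i < k ∧ k + 1 < l.length ∧ ∃ (hk : k < l.length), l[k] = x := by
  simp only [EvoNet.interm, Set.mem_setOf_eq, List.drop_drop] at hx
  rw [List.mem_iff_getElem] at hx
  obtain ⟨t, ht, hval⟩ := hx
  rw [List.length_dropLast, List.length_drop] at ht
  rw [List.getElem_dropLast, List.getElem_drop] at hval
  exact ⟨i + 1 + t, by omega, by omega, by omega, hval⟩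

lemma interm_mem {l : List V} {x : V} (hx : x ∈ EvoNet.interm l) : x ∈ l := by
  simp only [EvoNet.interm, Set.mem_setOf_eq] at hx
  exact List.drop_subset 1 l ((List.dropLast_sublist _).subset hx)

end GL2

theorem glisters_lemma2 {V : Type*} (N : EvoNet V) (h v₁ v₂ : V)
    (hh : N.IsHybrid h)
    (p₁ p₂ : List V)
    (hp₁ : N.IsPath p₁) (hp₂ : N.IsPath p₂)
    (hl₁ : 2 ≤ p₁.length) (hl₂ : 2 ≤ p₂.length)
    (ho₁ : p₁.head? = some v₁) (ho₂ : p₂.head? = some v₂)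
    (he₁ : p₁.getLast? = some h) (he₂ : p₂.getLast? = some h)
    (hshare : ∀ x : V, x ∈ p₁ → x ∈ p₂ → x = h) :
    (∃ c : EvoNet.RetCycle N, c.hend = h ∧ v₁ ∈ c.intermNodes ∧ v₂ ∈ c.intermNodes) ∨
    (∃ c : EvoNet.RetCycle N, c.hend = h ∧
      ((v₁ ∈ c.intermNodes ∧ ∃ s : V, c.SplitIs s ∧ N.Desc v₂ s) ∨
       (v₂ ∈ c.intermNodes ∧ ∃ s : V, c.SplitIs s ∧ N.Desc v₁ s))) := by
  classical
  obtain ⟨hne₁, hc₁⟩ := hp₁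
  obtain ⟨hne₂, hc₂⟩ := hp₂
  obtain ⟨l₁, hPc, hPh⟩ := GL2.exists_prefix (N.rooted v₁) hc₁ ho₁
  obtain ⟨l₂, hQc, hQh⟩ := GL2.exists_prefix (N.rooted v₂) hc₂ ho₂
  set P : List V := l₁ ++ p₁ with hPdef
  set Q : List V := l₂ ++ p₂ with hQdef
  have hnlen : P.length = l₁.length + p₁.length := by simp [hPdef]
  have hmlen : Q.length = l₂.length + p₂.length := by simp [hQdef]
  have hn2 : 2 ≤ P.length := by omega
  have hm2 : 2 ≤ Q.length := by omega
  have hPl : P.getLast? = some h := by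
    rw [hPdef, List.getLast?_append, he₁]; rfl
  have hQl : Q.getLast? = some h := by
    rw [hQdef, List.getLast?_append, he₂]; rfl
  have hP0 : P[0]'(by omega) = N.root := by
    have := hPh
    rw [List.head?_eq_getElem?, List.getElem?_eq_getElem (by omega)] at this
    exact Option.some.inj this
  have hQ0 : Q[0]'(by omega) = N.root := by
    have := hQh
    rw [List.head?_eq_getElem?, List.getElem?_eq_getElem (by omega)] at this
    exact Option.some.inj this
  have hPlast : P[P.length - 1]'(by omega) = h := by
    have := hPl
    rw [List.getLast?_eq_getElem?, List.getElem?_eq_getElem (by omega)] at this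
    exact Option.some.inj this
  have hQlast : Q[Q.length - 1]'(by omega) = h := by
    have := hQl
    rw [List.getLast?_eq_getElem?, List.getElem?_eq_getElem (by omega)] at this
    exact Option.some.inj this
  have injP : ∀ {i j : ℕ} (hi : i < P.length) (hj : j < P.length),
      P[i]'hi = P[j]'hj → i = j :=
    fun hi hj => GL2.chain'_inj hPc N.acyclic hi hj
  have hrooth : N.root ≠ h := by
    intro hrh
    obtain ⟨u, w, -, hu, -⟩ := hh
    exact N.acyclic h (Relation.TransGen.tail' (hrh ▸ N.rooted u) hu)
  have hPsuf : ∀ t (ht : t < p₁.length), P[l₁.length + t]'(by omega) = p₁[t]'ht := by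
    intro t ht
    have hx : (l₁ ++ p₁)[l₁.length + t]'(by rw [List.length_append]; omega) = p₁[t]'ht := by
      rw [List.getElem_append_right (by omega)]
      exact GL2.gec (by omega) _
    exact hx
  have hQsuf : ∀ t (ht : t < p₂.length), Q[l₂.length + t]'(by omega) = p₂[t]'ht := by
    intro t ht
    have hx : (l₂ ++ p₂)[l₂.length + t]'(by rw [List.length_append]; omega) = p₂[t]'ht := by
      rw [List.getElem_append_right (by omega)]
      exact GL2.gec (by omega) _
    exact hx
  have hp10 : p₁[0]'(by omega) = v₁ := by
    have := ho₁
    rw [List.head?_eq_getElem?, List.getElem?_eq_getElem (by omega)] at this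
    exact Option.some.inj this
  have hp20 : p₂[0]'(by omega) = v₂ := by
    have := ho₂
    rw [List.head?_eq_getElem?, List.getElem?_eq_getElem (by omega)] at this
    exact Option.some.inj this
  -- choose the split index i, maximal with P[i] ∈ Q and P[i] ≠ h
  obtain ⟨i, hin, hsQmem, hsh, hmax⟩ :
      ∃ i, ∃ (hin : i < P.length), P[i] ∈ Q ∧ P[i] ≠ h ∧
        ∀ k (hk : k < P.length), P[k] ∈ Q → P[k] ≠ h → k ≤ i := by
    set pr : ℕ → Prop := fun k => ∃ hk : k < P.length, P[k] ∈ Q ∧ P[k] ≠ h with hpr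
    have pred0 : pr 0 := by
      refine ⟨by omega, ?_, ?_⟩
      · rw [hP0, ← hQ0]; exact List.getElem_mem _
      · rw [hP0]; exact hrooth
    obtain ⟨hin, h1, h2⟩ := Nat.findGreatest_spec (Nat.zero_le (P.length - 1)) pred0
    refine ⟨Nat.findGreatest pr (P.length - 1), hin, h1, h2, ?_⟩
    intro k hk hkQ hkh
    exact Nat.le_findGreatest (by omega) ⟨hk, hkQ, hkh⟩
  have hilt : i + 1 < P.length := by
    by_contra hcon
    have hieq : i = P.length - 1 := by omega
    subst hieq
    exact hsh hPlast
  obtain ⟨j, hjm, hQj⟩ := List.mem_iff_getElem.mp hsQmem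
  have hjlt : j + 1 < Q.length := by
    by_contra hcon
    have hjeq : j = Q.length - 1 := by omega
    subst hjeq
    exact hsh (hQj.symm.trans hQlast)
  -- build the reticulation cycle
  have pathp : N.IsPath (P.drop i) :=
    ⟨List.length_pos_iff.mp (by rw [List.length_drop]; omega), GL2.chain'_drop hPc i⟩
  have pathq : N.IsPath (Q.drop j) :=
    ⟨List.length_pos_iff.mp (by rw [List.length_drop]; omega), GL2.chain'_drop hQc j⟩
  have lenp : 2 ≤ (P.drop i).length := by rw [List.length_drop]; omega
  have lenq : 2 ≤ (Q.drop j).length := by rw [List.length_drop]; omega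
  have hheadp : (P.drop i).head? = some (P[i]'hin) := by
    rw [List.head?_drop, List.getElem?_eq_getElem hin]
  have hheadq : (Q.drop j).head? = some (P[i]'hin) := by
    rw [List.head?_drop, List.getElem?_eq_getElem hjm, hQj]
  have sameo : (P.drop i).head? = (Q.drop j).head? := hheadp.trans hheadq.symm
  have lastp : (P.drop i).getLast? = some h := (GL2.getLast?_drop hin).trans hPl
  have lastq : (Q.drop j).getLast? = some h := (GL2.getLast?_drop hjm).trans hQl
  have hdisj : ∀ x, x ∈ EvoNet.interm (P.drop i) → x ∉ EvoNet.interm (Q.drop j) := by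
    intro x hxp hxq
    obtain ⟨k, hik, hk1, hkn, hkx⟩ := GL2.interm_spec hxp
    have hxQ : x ∈ Q := List.drop_subset _ _ (GL2.interm_mem hxq)
    have hxh : x ≠ h := by
      intro heq
      have : k = P.length - 1 := injP hkn (by omega) ((hkx.trans heq).trans hPlast.symm)
      omega
    have := hmax k hkn (hkx.symm ▸ hxQ) (fun he => hxh (hkx.symm.trans he))
    omega
  have hpqne : P.drop i ≠ Q.drop j := by
    intro heq
    have hlen : P.length - i = Q.length - j := by
      have := congrArg List.length heq
      rw [List.length_drop, List.length_drop] at this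
      exact this
    have e1 : (P.drop i)[P.length - i - 2]'(by rw [List.length_drop]; omega)
        = P[P.length - 2]'(by omega) := by
      rw [List.getElem_drop]; exact GL2.gec (by omega) _
    have e2 : (Q.drop j)[P.length - i - 2]'(by rw [List.length_drop]; omega)
        = Q[Q.length - 2]'(by omega) := by
      rw [List.getElem_drop]; exact GL2.gec (by omega) _
    have e3 : (P.drop i)[P.length - i - 2]'(by rw [List.length_drop]; omega)
        = (Q.drop j)[P.length - i - 2]'(by rw [List.length_drop]; omega) := by
      congr 1
    have ePQ : P[P.length - 2]'(by omega) = Q[Q.length - 2]'(by omega) :=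
      e1.symm.trans (e3.trans e2)
    have hmem1 : P[P.length - 2]'(by omega) ∈ p₁ := by
      rw [GL2.gec (show P.length - 2 = l₁.length + (p₁.length - 2) by omega),
        hPsuf (p₁.length - 2) (by omega)]
      exact List.getElem_mem _
    have hmem2 : P[P.length - 2]'(by omega) ∈ p₂ := by
      rw [ePQ, GL2.gec (show Q.length - 2 = l₂.length + (p₂.length - 2) by omega),
        hQsuf (p₂.length - 2) (by omega)]
      exact List.getElem_mem _
    have : P[P.length - 2]'(by omega) = h := hshare _ hmem1 hmem2
    have : P.length - 2 = P.length - 1 := injP (by omega) (by omega) (this.trans hPlast.symm)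
    omega
  let c : EvoNet.RetCycle N :=
    ⟨h, P.drop i, Q.drop j, pathp, pathq, lenp, lenq, sameo, lastp, lastq, hh, hdisj, hpqne⟩
  have hsplit : c.SplitIs (P[i]'hin) := hheadp
  -- facts about where v₁, v₂ sit
  have hv1 : P[l₁.length]'(by omega) = v₁ := by
    rw [GL2.gec (show l₁.length = l₁.length + 0 by omega), hPsuf 0 (by omega), hp10]
  have hv2 : Q[l₂.length]'(by omega) = v₂ := by
    rw [GL2.gec (show l₂.length = l₂.length + 0 by omega), hQsuf 0 (by omega), hp20]
  have hv1mem : i < l₁.length → v₁ ∈ c.intermNodes := by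
    intro hi1
    refine Set.mem_union_left _ ?_
    show v₁ ∈ EvoNet.interm (P.drop i)
    rw [← hv1]
    exact GL2.mem_interm hi1 (by omega)
  have hv2mem : j < l₂.length → v₂ ∈ c.intermNodes := by
    intro hj2
    refine Set.mem_union_right _ ?_
    show v₂ ∈ EvoNet.interm (Q.drop j)
    rw [← hv2]
    exact GL2.mem_interm hj2 (by omega)
  have hdesc1 : l₁.length ≤ i → N.Desc v₁ (P[i]'hin) := by
    intro hi1
    have eS : P[i]'hin = p₁[i - l₁.length]'(by omega) := by
      rw [GL2.gec (show i = l₁.length + (i - l₁.length) by omega),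
        hPsuf (i - l₁.length) (by omega)]
    rw [EvoNet.Desc, eS, ← hp10]
    exact GL2.chain'_rtg hc₁ (Nat.zero_le _) (by omega)
  have hdesc2 : l₂.length ≤ j → N.Desc v₂ (P[i]'hin) := by
    intro hj2
    have eS : P[i]'hin = p₂[j - l₂.length]'(by omega) := by
      rw [← hQj, GL2.gec (show j = l₂.length + (j - l₂.length) by omega),
        hQsuf (j - l₂.length) (by omega)]
    rw [EvoNet.Desc, eS, ← hp20]
    exact GL2.chain'_rtg hc₂ (Nat.zero_le _) (by omega)
  have hsp1 : l₁.length ≤ i → P[i]'hin ∈ p₁ := by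
    intro hi1
    rw [GL2.gec (show i = l₁.length + (i - l₁.length) by omega),
      hPsuf (i - l₁.length) (by omega)]
    exact List.getElem_mem _
  have hsp2 : l₂.length ≤ j → P[i]'hin ∈ p₂ := by
    intro hj2
    rw [← hQj, GL2.gec (show j = l₂.length + (j - l₂.length) by omega),
      hQsuf (j - l₂.length) (by omega)]
    exact List.getElem_mem _
  rcases Nat.lt_or_ge i l₁.length with hi1 | hi1 <;>
    rcases Nat.lt_or_ge j l₂.length with hj2 | hj2
  · exact Or.inl ⟨c, rfl, hv1mem hi1, hv2mem hj2⟩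
  · exact Or.inr ⟨c, rfl, Or.inl ⟨hv1mem hi1, P[i]'hin, hsplit, hdesc2 hj2⟩⟩
  · exact Or.inr ⟨c, rfl, Or.inr ⟨hv2mem hj2, P[i]'hin, hsplit, hdesc1 hi1⟩⟩
  · exact absurd (hshare _ (hsp1 hi1) (hsp2 hj2)) hsh
end

section
/- Every level-1 network is 1-nested: if no biconnected subgraph of a rooted DAG contains more than one hybrid node, then no node is an intermediate node of reticulation cycles for two different hybrid nodes. -/
namespace EvoNet

open Relation List

variable {V : Type*}

/-! ### Generic list lemmas -/

lemma mem_zip_tail : ∀ {p : List V} {x y : V},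
    (x, y) ∈ p.zip p.tail ↔ ∃ l₁ l₂, p = l₁ ++ x :: y :: l₂ := by
  intro p
  induction p with
  | nil => intro x y; simp
  | cons a rest ih =>
    intro x y
    cases rest with
    | nil =>
      simp only [List.tail_cons, List.zip_nil_right, List.not_mem_nil, false_iff]
      rintro ⟨l₁, l₂, hl⟩
      have := congrArg List.length hl
      simp at this; omega
    | cons b rest' =>
      simp only [List.tail_cons, List.zip_cons_cons, List.mem_cons]
      constructor
      · rintro (h | h)
        · have h1 : x = a ∧ y = b := by simpa [Prod.ext_iff] using h
          exact ⟨[], rest', by simp [h1.1, h1.2]⟩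
        · obtain ⟨l₁, l₂, hl⟩ := (ih (x := x) (y := y)).1 (by simpa using h)
          exact ⟨a :: l₁, l₂, by simp [hl]⟩
      · rintro ⟨l₁, l₂, hl⟩
        cases l₁ with
        | nil =>
          simp only [List.nil_append, List.cons.injEq] at hl
          exact Or.inl (by simp [hl.1, hl.2.1])
        | cons c l' =>
          simp only [List.cons_append, List.cons.injEq] at hl
          refine Or.inr ?_
          have : (x, y) ∈ (b :: rest').zip (b :: rest').tail :=
            (ih (x := x) (y := y)).2 ⟨l', l₂, hl.2⟩
          simpa using this

lemma zip_coords {p : List V} {x y : V} (h : (x, y) ∈ p.zip p.tail) :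
    x ∈ p ∧ y ∈ p := by
  obtain ⟨l₁, l₂, rfl⟩ := mem_zip_tail.1 h
  constructor <;> simp

lemma chain'_rel {r : V → V → Prop} {p : List V} (h : p.Chain' r) {x y : V}
    (hm : (x, y) ∈ p.zip p.tail) : r x y := by
  obtain ⟨l₁, l₂, rfl⟩ := mem_zip_tail.1 hm
  have h2 : [x, y].Chain' r := h.infix ⟨l₁, l₂, by simp⟩
  exact (List.isChain_cons_cons.1 h2).1

lemma chain'_transGen {r : V → V → Prop} :
    ∀ (l : List V) (a : V), (a :: l).Chain' r → ∀ b ∈ l, Relation.TransGen r a b := by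
  intro l
  induction l with
  | nil => simp
  | cons c rest ih =>
    intro a h b hb
    have hac : r a c := (List.isChain_cons_cons.1 h).1
    have hc : (c :: rest).Chain' r := (List.isChain_cons_cons.1 h).2
    rcases List.mem_cons.1 hb with rfl | hb
    · exact TransGen.single hac
    · exact (TransGen.single hac).trans (ih c hc b hb)

lemma chain_nodup (N : EvoNet V) : ∀ {p : List V}, p.Chain' N.arc → p.Nodup := by
  intro p
  induction p with
  | nil => intro _; simp
  | cons a rest ih =>
    intro h
    refine List.nodup_cons.2 ⟨fun ha => ?_, ih h.tail⟩
    exact N.acyclic a (chain'_transGen rest a h a ha)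

/-! ### Connectivity lemmas -/

lemma uadj_symm (A : Set (V × V)) : Symmetric (uadj A) := fun _ _ h => h.symm

lemma rtg_symm {A : Set (V × V)} {x y : V}
    (h : ReflTransGen (uadj A) x y) : ReflTransGen (uadj A) y x :=
  by haveI : Std.Symm (uadj A) := ⟨fun _ _ h' => uadj_symm A h'⟩; exact Std.Symm.symm _ _ h

lemma rtg_mono {A B : Set (V × V)} (hAB : A ⊆ B) {x y : V}
    (h : ReflTransGen (uadj A) x y) : ReflTransGen (uadj B) x y :=
  ReflTransGen.mono (fun _ _ (hab : uadj A _ _) => hab.imp (fun h' => hAB h') (fun h' => hAB h')) x y h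

lemma reach_ne {A : Set (V × V)} {v x y : V}
    (h : ReflTransGen (uadj (avoid A v)) x y) (hy : y = v) : x = v := by
  induction h with
  | refl => exact hy
  | tail _ hstep _ =>
    subst hy
    rcases hstep with h1 | h1
    · exact absurd rfl h1.2.2
    · exact absurd rfl h1.2.1

lemma conn_head {A : Set (V × V)} :
    ∀ (l : List V) (a : V), (∀ e ∈ (a :: l).zip l, e ∈ A) →
      ∀ x ∈ a :: l, ReflTransGen (uadj A) a x := by
  intro l
  induction l with
  | nil => intro a _ x hx; simp at hx; subst hx; exact .refl
  | cons b rest ih =>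
    intro a hA x hx
    have hab : (a, b) ∈ A := hA (a, b) (by simp [List.zip_cons_cons])
    have step : ReflTransGen (uadj A) a b := ReflTransGen.single (Or.inl hab)
    rcases List.mem_cons.1 hx with rfl | hx
    · exact .refl
    · refine step.trans (ih b ?_ x hx)
      intro e he
      exact hA e (by simp only [List.zip_cons_cons]; exact List.mem_cons_of_mem _ he)

lemma conn_mem {A : Set (V × V)} {p : List V}
    (hp : ∀ e ∈ p.zip p.tail, e ∈ A) {x y : V} (hx : x ∈ p) (hy : y ∈ p) :
    ReflTransGen (uadj A) x y := by
  cases p with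
  | nil => simp at hx
  | cons a l =>
    have h1 := conn_head l a (by simpa using hp) x hx
    have h2 := conn_head l a (by simpa using hp) y hy
    exact (rtg_symm h1).trans h2

/-! ### everts lemmas -/

lemma everts_mono {A B : Set (V × V)} (h : A ⊆ B) : everts A ⊆ everts B := by
  rintro x ⟨y, hy | hy⟩
  exacts [⟨y, Or.inl (h hy)⟩, ⟨y, Or.inr (h hy)⟩]

lemma mem_of_everts_avoid {A : Set (V × V)} {v x : V}
    (h : x ∈ everts (avoid A v)) : x ∈ everts A ∧ x ≠ v := by
  obtain ⟨y, h | h⟩ := h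
  · exact ⟨⟨y, Or.inl h.1⟩, h.2.1⟩
  · exact ⟨⟨y, Or.inr h.1⟩, h.2.2⟩

lemma exists_adj_in_zip : ∀ (p : List V), 2 ≤ p.length → ∀ x ∈ p,
    ∃ y, (x, y) ∈ p.zip p.tail ∨ (y, x) ∈ p.zip p.tail := by
  intro p
  induction p with
  | nil => simp
  | cons a rest ih =>
    intro hlen x hx
    cases rest with
    | nil => simp at hlen
    | cons b rest' =>
      rcases List.mem_cons.1 hx with rfl | hx
      · exact ⟨b, Or.inl (by simp [List.zip_cons_cons])⟩
      · cases rest' with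
        | nil =>
          simp only [List.mem_singleton] at hx; subst hx
          exact ⟨a, Or.inr (by simp [List.zip_cons_cons])⟩
        | cons c rest'' =>
          obtain ⟨y, hy⟩ := ih (by simp) x hx
          have emb : ∀ e ∈ (b :: c :: rest'').zip (c :: rest''),
              e ∈ (a :: b :: c :: rest'').zip (b :: c :: rest'') := by
            intro e he
            simp only [List.zip_cons_cons]
            exact List.mem_cons_of_mem _ he
          simp only [List.tail_cons] at hy ⊢
          rcases hy with hy | hy
          · exact ⟨y, Or.inl (emb _ hy)⟩
          · exact ⟨y, Or.inr (emb _ hy)⟩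

/-! ### interm lemmas -/

lemma interm_decomp_aux :
    ∀ (l : List V) (a x : V), x ∈ l.dropLast →
      ∃ l₁ c b l₂, a :: l = l₁ ++ c :: x :: b :: l₂ := by
  intro l
  induction l with
  | nil => simp
  | cons d m ih =>
    intro a x hx
    cases m with
    | nil => simp at hx
    | cons e m' =>
      have hdl : (d :: e :: m').dropLast = d :: (e :: m').dropLast := by simp
      rw [hdl] at hx
      rcases List.mem_cons.1 hx with rfl | hx
      · exact ⟨[], a, e, m', rfl⟩
      · obtain ⟨l₁, c, b, l₂, hl⟩ := ih d x hx
        exact ⟨a :: l₁, c, b, l₂, by rw [show a :: d :: e :: m' = a :: (d :: e :: m') from rfl, hl]; simp⟩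

lemma interm_decomp {p : List V} {x : V} (h : x ∈ interm p) :
    ∃ l₁ a b l₂, p = l₁ ++ a :: x :: b :: l₂ := by
  cases p with
  | nil => simp [interm] at h
  | cons a l =>
    have hx : x ∈ l.dropLast := h
    exact interm_decomp_aux l a x hx

lemma mem_interm_iff {p : List V} {x : V} :
    x ∈ interm p ↔ ∃ l₁ l₂, p = l₁ ++ x :: l₂ ∧ l₁ ≠ [] ∧ l₂ ≠ [] := by
  constructor
  · intro h
    obtain ⟨l₁, a, b, l₂, rfl⟩ := interm_decomp h
    exact ⟨l₁ ++ [a], b :: l₂, by simp, by simp, by simp⟩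
  · rintro ⟨l₁, l₂, rfl, h1, h2⟩
    cases l₁ with
    | nil => exact absurd rfl h1
    | cons c m =>
      show x ∈ ((c :: (m ++ x :: l₂)).drop 1).dropLast
      simp only [List.drop_succ_cons, List.drop_zero]
      rw [List.dropLast_append_of_ne_nil (by simp)]
      cases l₂ with
      | nil => exact absurd rfl h2
      | cons d m' => simp

lemma mem_of_interm {p : List V} {x : V} (h : x ∈ interm p) : x ∈ p := by
  obtain ⟨l₁, a, b, l₂, rfl⟩ := interm_decomp h; simp

lemma mem_interm_of {p : List V} (hne : p ≠ []) {x : V} (hx : x ∈ p)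
    (h1 : x ≠ p.head hne) (h2 : x ≠ p.getLast hne) : x ∈ interm p := by
  cases p with
  | nil => simp at hx
  | cons a l =>
    simp only [List.head_cons] at h1
    rcases List.mem_cons.1 hx with rfl | hx
    · exact absurd rfl h1
    · show x ∈ l.dropLast
      have hlne : l ≠ [] := List.ne_nil_of_mem hx
      have h2' : x ≠ l.getLast hlne := by rwa [List.getLast_cons hlne] at h2
      have hdec := List.dropLast_append_getLast hlne
      have hx' : x ∈ l.dropLast ++ [l.getLast hlne] := by rw [hdec]; exact hx
      rcases List.mem_append.1 hx' with h | h
      · exact h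
      · simp only [List.mem_singleton] at h; exact absurd h h2'

lemma interm_ne_of_nodup {p : List V} (hnd : p.Nodup) {x : V} (h : x ∈ interm p)
    (hne : p ≠ []) : x ≠ p.head hne ∧ x ≠ p.getLast hne := by
  obtain ⟨l₁, a, b, l₂, hp⟩ := interm_decomp h
  have hp' : p = (l₁ ++ [a]) ++ x :: b :: l₂ := by simp [hp]
  have hnd' : ((l₁ ++ [a]) ++ x :: b :: l₂).Nodup := hp' ▸ hnd
  have hdisj := (List.nodup_append.1 hnd').2.2
  have hxr : x ∈ x :: b :: l₂ := by simp
  constructor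
  · intro hh
    have hhead : p.head hne ∈ l₁ ++ [a] := by
      subst hp'
      cases l₁ with
      | nil => simp
      | cons c m => simp
    exact hdisj _ hhead _ hxr hh.symm
  · intro hh
    have hnd2 : (x :: b :: l₂).Nodup := (List.nodup_append.1 hnd').2.1
    have hxnot : x ∉ b :: l₂ := (List.nodup_cons.1 hnd2).1
    have hlast2 : p.getLast hne = (b :: l₂).getLast (by simp) := by
      subst hp'
      rw [List.getLast_append]
      simp [List.getLast_cons]
    exact hxnot (by rw [hh, hlast2]; exact List.getLast_mem _)

end EvoNet


namespace EvoNet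

open Relation List

variable {V : Type*}

/-! ### Path connectivity avoiding a vertex -/

lemma path_avoid_conn {A : Set (V × V)} {p : List V} (hnd : p.Nodup)
    (hsub : ∀ e ∈ p.zip p.tail, e ∈ A) (v : V) {x : V} (hx : x ∈ p) (hxv : x ≠ v)
    (hne : p ≠ []) :
    ReflTransGen (uadj (avoid A v)) x (p.head hne) ∨
      ReflTransGen (uadj (avoid A v)) x (p.getLast hne) := by
  by_cases hv : v ∈ p
  · obtain ⟨l₁, l₂, hp⟩ := List.append_of_mem hv
    subst hp
    have hv1 : v ∉ l₁ := fun h => (List.nodup_append.1 hnd).2.2 v h v (by simp) rfl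
    have hv2 : v ∉ l₂ := (List.nodup_cons.1 (List.nodup_append.1 hnd).2.1).1
    have hx' : x ∈ l₁ ∨ x ∈ l₂ := by
      rcases List.mem_append.1 hx with h | h
      · exact Or.inl h
      · rcases List.mem_cons.1 h with rfl | h
        · exact absurd rfl hxv
        · exact Or.inr h
    rcases hx' with hx1 | hx2
    · left
      have hl₁ne : l₁ ≠ [] := List.ne_nil_of_mem hx1
      have hsub' : ∀ e ∈ l₁.zip l₁.tail, e ∈ avoid A v := by
        rintro ⟨e1, e2⟩ he
        obtain ⟨m₁, m₂, hm⟩ := mem_zip_tail.1 he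
        have he1 : e1 ∈ l₁ := by rw [hm]; simp
        have he2 : e2 ∈ l₁ := by rw [hm]; simp
        refine ⟨hsub _ (mem_zip_tail.2 ⟨m₁, m₂ ++ v :: l₂, ?_⟩),
          fun h => hv1 (h ▸ he1), fun h => hv1 (h ▸ he2)⟩
        rw [hm]; simp
      have hconn := conn_mem hsub' hx1 (List.head_mem hl₁ne)
      have hhead : l₁.head hl₁ne = (l₁ ++ v :: l₂).head hne := by
        cases l₁ with
        | nil => exact absurd rfl hl₁ne
        | cons c m => simp
      rw [← hhead]
      exact hconn
    · right
      have hl₂ne : l₂ ≠ [] := List.ne_nil_of_mem hx2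
      have hsub' : ∀ e ∈ l₂.zip l₂.tail, e ∈ avoid A v := by
        rintro ⟨e1, e2⟩ he
        obtain ⟨m₁, m₂, hm⟩ := mem_zip_tail.1 he
        have he1 : e1 ∈ l₂ := by rw [hm]; simp
        have he2 : e2 ∈ l₂ := by rw [hm]; simp
        refine ⟨hsub _ (mem_zip_tail.2 ⟨l₁ ++ v :: m₁, m₂, ?_⟩),
          fun h => hv2 (h ▸ he1), fun h => hv2 (h ▸ he2)⟩
        rw [hm]; simp
      have hconn := conn_mem hsub' hx2 (List.getLast_mem hl₂ne)
      have hlast : l₂.getLast hl₂ne = (l₁ ++ v :: l₂).getLast hne := by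
        rw [List.getLast_append]
        simp [hl₂ne, List.getLast_cons]
      rw [← hlast]
      exact hconn
  · left
    have hsub' : ∀ e ∈ p.zip p.tail, e ∈ avoid A v := by
      rintro ⟨e1, e2⟩ he
      obtain ⟨h1, h2⟩ := zip_coords he
      exact ⟨hsub _ he, fun h => hv (h ▸ h1), fun h => hv (h ▸ h2)⟩
    exact conn_mem hsub' hx (List.head_mem hne)

/-! ### Basic facts about reticulation cycles -/

variable {N : EvoNet V}

lemma RetCycle.p_ne (c : RetCycle N) : c.p ≠ [] := c.isPath_p.1
lemma RetCycle.q_ne (c : RetCycle N) : c.q ≠ [] := c.isPath_q.1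
lemma RetCycle.p_nodup (c : RetCycle N) : c.p.Nodup := chain_nodup N c.isPath_p.2
lemma RetCycle.q_nodup (c : RetCycle N) : c.q.Nodup := chain_nodup N c.isPath_q.2

lemma RetCycle.head_q_eq (c : RetCycle N) : c.q.head c.q_ne = c.p.head c.p_ne := by
  have h := c.same_origin
  rw [List.head?_eq_head c.p_ne, List.head?_eq_head c.q_ne] at h
  exact (Option.some.inj h).symm

lemma RetCycle.getLast_p_eq (c : RetCycle N) : c.p.getLast c.p_ne = c.hend := by
  have h := c.last_p
  rw [List.getLast?_eq_getLast c.p_ne] at h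
  exact Option.some.inj h

lemma RetCycle.getLast_q_eq (c : RetCycle N) : c.q.getLast c.q_ne = c.hend := by
  have h := c.last_q
  rw [List.getLast?_eq_getLast c.q_ne] at h
  exact Option.some.inj h

lemma RetCycle.zp_sub (c : RetCycle N) : ∀ e ∈ c.p.zip c.p.tail, e ∈ c.arcs :=
  fun _ he => Or.inl he

lemma RetCycle.zq_sub (c : RetCycle N) : ∀ e ∈ c.q.zip c.q.tail, e ∈ c.arcs :=
  fun _ he => Or.inr he

lemma RetCycle.arcs_arc (c : RetCycle N) : ∀ e ∈ c.arcs, N.arc e.1 e.2 := by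
  rintro ⟨a, b⟩ (h | h)
  · exact chain'_rel c.isPath_p.2 h
  · exact chain'_rel c.isPath_q.2 h

lemma RetCycle.everts_sub (c : RetCycle N) : everts c.arcs ⊆ c.nodes := by
  rintro x ⟨y, h | h⟩ <;> rcases h with h | h
  · exact Or.inl (zip_coords h).1
  · exact Or.inr (zip_coords h).1
  · exact Or.inl (zip_coords h).2
  · exact Or.inr (zip_coords h).2

lemma RetCycle.mem_everts_arcs (c : RetCycle N) {x : V} (hx : x ∈ c.nodes) :
    x ∈ everts c.arcs := by
  rcases hx with hx | hx
  · obtain ⟨y, hy | hy⟩ := exists_adj_in_zip c.p c.len_p x hx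
    · exact ⟨y, Or.inl (Or.inl hy)⟩
    · exact ⟨y, Or.inr (Or.inl hy)⟩
  · obtain ⟨y, hy | hy⟩ := exists_adj_in_zip c.q c.len_q x hx
    · exact ⟨y, Or.inl (Or.inr hy)⟩
    · exact ⟨y, Or.inr (Or.inr hy)⟩

/-! ### A reticulation cycle is biconnected -/

lemma RetCycle.econn (c : RetCycle N) : EConnected c.arcs := by
  intro a b ha hb
  have key : ∀ z ∈ everts c.arcs, ReflTransGen (uadj c.arcs) z (c.p.head c.p_ne) := by
    intro z hz
    rcases c.everts_sub hz with hz | hz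
    · exact conn_mem c.zp_sub hz (List.head_mem c.p_ne)
    · have h := conn_mem c.zq_sub hz (List.head_mem c.q_ne)
      rwa [c.head_q_eq] at h
  exact (key a ha).trans (rtg_symm (key b hb))

lemma RetCycle.econn_avoid (c : RetCycle N) (v : V) : EConnected (avoid c.arcs v) := by
  intro a b ha hb
  have key : ∀ z ∈ everts (avoid c.arcs v),
      ReflTransGen (uadj (avoid c.arcs v)) z (c.p.head c.p_ne) ∨
        ReflTransGen (uadj (avoid c.arcs v)) z c.hend := by
    intro z hz
    obtain ⟨hz1, hz2⟩ := mem_of_everts_avoid hz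
    rcases c.everts_sub hz1 with hzp | hzq
    · have h := path_avoid_conn c.p_nodup c.zp_sub v hzp hz2 c.p_ne
      rwa [c.getLast_p_eq] at h
    · have h := path_avoid_conn c.q_nodup c.zq_sub v hzq hz2 c.q_ne
      rwa [c.getLast_q_eq, c.head_q_eq] at h
  obtain ⟨t, ht⟩ : ∃ t, ∀ z ∈ everts (avoid c.arcs v),
      ReflTransGen (uadj (avoid c.arcs v)) z t := by
    by_cases hvp : v ∈ c.p
    · by_cases hvq : v ∈ c.q
      · have hv_end : v = c.p.head c.p_ne ∨ v = c.hend := by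
          by_contra hcon
          push_neg at hcon
          have h1 : v ∈ interm c.p :=
            mem_interm_of c.p_ne hvp hcon.1 (by rw [c.getLast_p_eq]; exact hcon.2)
          have h2 : v ∈ interm c.q :=
            mem_interm_of c.q_ne hvq (by rw [c.head_q_eq]; exact hcon.1)
              (by rw [c.getLast_q_eq]; exact hcon.2)
          exact c.intDisjoint v h1 h2
        rcases hv_end with hv | hv
        · refine ⟨c.hend, fun z hz => ?_⟩
          rcases key z hz with h | h
          · exact absurd (reach_ne h hv.symm) (mem_of_everts_avoid hz).2
          · exact h
        · refine ⟨c.p.head c.p_ne, fun z hz => ?_⟩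
          rcases key z hz with h | h
          · exact h
          · exact absurd (reach_ne h hv.symm) (mem_of_everts_avoid hz).2
      · have hq_av : ∀ e ∈ c.q.zip c.q.tail, e ∈ avoid c.arcs v := by
          rintro ⟨e1, e2⟩ he
          obtain ⟨h1, h2⟩ := zip_coords he
          exact ⟨c.zq_sub _ he, fun h => hvq (h ▸ h1), fun h => hvq (h ▸ h2)⟩
        have hbridge : ReflTransGen (uadj (avoid c.arcs v)) (c.p.head c.p_ne) c.hend := by
          have h := conn_mem hq_av (List.head_mem c.q_ne) (List.getLast_mem c.q_ne)
          rwa [c.head_q_eq, c.getLast_q_eq] at h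
        refine ⟨c.hend, fun z hz => ?_⟩
        rcases key z hz with h | h
        · exact h.trans hbridge
        · exact h
    · have hp_av : ∀ e ∈ c.p.zip c.p.tail, e ∈ avoid c.arcs v := by
        rintro ⟨e1, e2⟩ he
        obtain ⟨h1, h2⟩ := zip_coords he
        exact ⟨c.zp_sub _ he, fun h => hvp (h ▸ h1), fun h => hvp (h ▸ h2)⟩
      have hbridge : ReflTransGen (uadj (avoid c.arcs v)) (c.p.head c.p_ne) c.hend := by
        have h := conn_mem hp_av (List.head_mem c.p_ne) (List.getLast_mem c.p_ne)
        rwa [c.getLast_p_eq] at h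
      refine ⟨c.hend, fun z hz => ?_⟩
      rcases key z hz with h | h
      · exact h.trans hbridge
      · exact h
  exact (ht a ha).trans (rtg_symm (ht b hb))

lemma RetCycle.biconn (c : RetCycle N) : N.Biconnected c.arcs :=
  ⟨c.arcs_arc, c.econn, fun v => c.econn_avoid v⟩

/-! ### Union of two cycles sharing enough structure -/

lemma everts_union_elim {A B : Set (V × V)} {x : V} (h : x ∈ everts (A ∪ B)) :
    x ∈ everts A ∨ x ∈ everts B := by
  obtain ⟨y, h | h⟩ := h
  · rcases h with h | h
    exacts [Or.inl ⟨y, Or.inl h⟩, Or.inr ⟨y, Or.inl h⟩]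
  · rcases h with h | h
    exacts [Or.inl ⟨y, Or.inr h⟩, Or.inr ⟨y, Or.inr h⟩]

lemma avoid_union {A B : Set (V × V)} (v : V) :
    avoid (A ∪ B) v = avoid A v ∪ avoid B v := by
  ext e
  constructor
  · rintro ⟨h | h, h2⟩
    exacts [Or.inl ⟨h, h2⟩, Or.inr ⟨h, h2⟩]
  · rintro (⟨h, h2⟩ | ⟨h, h2⟩)
    exacts [⟨Or.inl h, h2⟩, ⟨Or.inr h, h2⟩]

lemma union_biconn (c₁ c₂ : RetCycle N)
    (hhub : ∀ v : V, ∃ w, w ∈ everts (avoid c₁.arcs v) ∧ w ∈ everts (avoid c₂.arcs v))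
    (hw0 : ∃ w, w ∈ everts c₁.arcs ∧ w ∈ everts c₂.arcs) :
    N.Biconnected (c₁.arcs ∪ c₂.arcs) := by
  refine ⟨?_, ?_, ?_⟩
  · rintro e (he | he)
    exacts [c₁.arcs_arc e he, c₂.arcs_arc e he]
  · intro a b ha hb
    obtain ⟨w, hw1, hw2⟩ := hw0
    have key : ∀ z ∈ everts (c₁.arcs ∪ c₂.arcs),
        ReflTransGen (uadj (c₁.arcs ∪ c₂.arcs)) z w := by
      intro z hz
      rcases everts_union_elim hz with hz | hz
      · exact rtg_mono Set.subset_union_left (c₁.econn z w hz hw1)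
      · exact rtg_mono Set.subset_union_right (c₂.econn z w hz hw2)
    exact (key a ha).trans (rtg_symm (key b hb))
  · intro v a b ha hb
    obtain ⟨w, hw1, hw2⟩ := hhub v
    rw [avoid_union] at ha hb
    have key : ∀ z ∈ everts (avoid c₁.arcs v ∪ avoid c₂.arcs v),
        ReflTransGen (uadj (avoid c₁.arcs v ∪ avoid c₂.arcs v)) z w := by
      intro z hz
      rcases everts_union_elim hz with hz | hz
      · exact rtg_mono Set.subset_union_left (c₁.econn_avoid v z w hz hw1)
      · exact rtg_mono Set.subset_union_right (c₂.econn_avoid v z w hz hw2)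
    rw [avoid_union]
    exact (key a ha).trans (rtg_symm (key b hb))

/-! ### Hub lemmas -/

lemma RetCycle.hub_x (c : RetCycle N) {P : List V} (hP : P = c.p ∨ P = c.q)
    {l₁ : List V} {u x b : V} {l₂ : List V} (hdec : P = l₁ ++ u :: x :: b :: l₂)
    (v : V) (hvx : v ≠ x) : x ∈ everts (avoid c.arcs v) := by
  have hch : P.Chain' N.arc := by
    rcases hP with rfl | rfl
    exacts [c.isPath_p.2, c.isPath_q.2]
  have hzsub : ∀ e ∈ P.zip P.tail, e ∈ c.arcs := by
    rcases hP with rfl | rfl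
    exacts [c.zp_sub, c.zq_sub]
  have hux : (u, x) ∈ P.zip P.tail := mem_zip_tail.2 ⟨l₁, b :: l₂, by simp [hdec]⟩
  have hxb : (x, b) ∈ P.zip P.tail := mem_zip_tail.2 ⟨l₁ ++ [u], l₂, by simp [hdec]⟩
  have haux : N.arc u x := chain'_rel hch hux
  have haxb : N.arc x b := chain'_rel hch hxb
  by_cases hvu : v = u
  · subst hvu
    have hbv : b ≠ v := fun h => N.acyclic v ((TransGen.single haux).tail (h ▸ haxb))
    exact ⟨b, Or.inl ⟨hzsub _ hxb, hvx.symm, hbv⟩⟩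
  · exact ⟨u, Or.inr ⟨hzsub _ hux, fun h => hvu h.symm, fun h => hvx h.symm⟩⟩

lemma hub_u_aux (N : EvoNet V) {A : Set (V × V)} {P Q : List V}
    (hchP : P.Chain' N.arc)
    (hzP : ∀ e ∈ P.zip P.tail, e ∈ A) (hzQ : ∀ e ∈ Q.zip Q.tail, e ∈ A)
    (hPne : P ≠ []) (hQne : Q ≠ [])
    (hheads : Q.head hQne = P.head hPne)
    (hlasts : Q.getLast hQne = P.getLast hPne)
    (hlenQ : 2 ≤ Q.length)
    (hdisj : ∀ z, z ∈ interm P → z ∉ interm Q)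
    {l₁ : List V} {u x b : V} {l₂ : List V} (hdec : P = l₁ ++ u :: x :: b :: l₂) :
    u ∈ everts (avoid A x) := by
  have hndP : P.Nodup := chain_nodup N hchP
  have hux : (u, x) ∈ P.zip P.tail := mem_zip_tail.2 ⟨l₁, b :: l₂, by simp [hdec]⟩
  have haux : N.arc u x := chain'_rel hchP hux
  have hunex : u ≠ x := fun h => N.acyclic x (TransGen.single (h ▸ haux))
  have hxiP : x ∈ interm P :=
    mem_interm_iff.2 ⟨l₁ ++ [u], b :: l₂, by simp [hdec], by simp, by simp⟩
  cases l₁ with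
  | nil =>
    simp only [List.nil_append] at hdec
    subst hdec
    obtain ⟨q0, t, restQ, hQ⟩ : ∃ q0 t restQ, Q = q0 :: t :: restQ := by
      cases Q with
      | nil => exact absurd rfl hQne
      | cons q0 Q' =>
        cases Q' with
        | nil => simp at hlenQ
        | cons t restQ => exact ⟨q0, t, restQ, rfl⟩
    subst hQ
    have hq0 : q0 = u := by simpa using hheads
    subst hq0
    have hut : (q0, t) ∈ (q0 :: t :: restQ).zip (q0 :: t :: restQ).tail := by
      simp [List.zip_cons_cons]
    have htx : t ≠ x := by
      cases restQ with
      | nil =>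
        intro h
        have hlast' : t = (q0 :: x :: b :: l₂).getLast hPne := by
          rw [← hlasts]; simp
        have hxlast := (interm_ne_of_nodup hndP hxiP hPne).2
        exact hxlast (h ▸ hlast')
      | cons t2 restQ' =>
        intro h
        have htQ : t ∈ interm (q0 :: t :: t2 :: restQ') :=
          mem_interm_iff.2 ⟨[q0], t2 :: restQ', rfl, by simp, by simp⟩
        exact hdisj x hxiP (h ▸ htQ)
    exact ⟨t, Or.inl ⟨hzQ _ hut, hunex, htx⟩⟩
  | cons c₀ m =>
    have huiP : u ∈ interm P :=
      mem_interm_iff.2 ⟨c₀ :: m, x :: b :: l₂, by simp [hdec], by simp, by simp⟩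
    obtain ⟨m₁, w, z, m₂, hdu⟩ := interm_decomp huiP
    have hwu : (w, u) ∈ P.zip P.tail := mem_zip_tail.2 ⟨m₁, z :: m₂, by simp [hdu]⟩
    have hawu : N.arc w u := chain'_rel hchP hwu
    have hwx : w ≠ x := fun h => N.acyclic x ((TransGen.single (h ▸ hawu)).tail haux)
    exact ⟨w, Or.inr ⟨hzP _ hwu, hwx, hunex⟩⟩

lemma RetCycle.hub_u (c : RetCycle N) {P : List V} (hP : P = c.p ∨ P = c.q)
    {l₁ : List V} {u x b : V} {l₂ : List V} (hdec : P = l₁ ++ u :: x :: b :: l₂) :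
    u ∈ everts (avoid c.arcs x) := by
  rcases hP with rfl | rfl
  · exact hub_u_aux N c.isPath_p.2 c.zp_sub c.zq_sub c.p_ne c.q_ne
      c.head_q_eq (by rw [c.getLast_q_eq, c.getLast_p_eq]) c.len_q c.intDisjoint hdec
  · exact hub_u_aux N c.isPath_q.2 c.zq_sub c.zp_sub c.q_ne c.p_ne
      c.head_q_eq.symm (by rw [c.getLast_q_eq, c.getLast_p_eq]) c.len_p
      (fun z hz hz2 => c.intDisjoint z hz2 hz) hdec

end EvoNet

theorem levelOne_oneNested {V : Type*} (N : EvoNet V)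
    (hL : N.LevelOne) : N.OneNested := by
  intro c₁ c₂ hne x hx1 hx2
  obtain ⟨P₁, hP₁, hxP₁⟩ : ∃ P, (P = c₁.p ∨ P = c₁.q) ∧ x ∈ EvoNet.interm P := by
    rcases hx1 with h | h
    exacts [⟨c₁.p, Or.inl rfl, h⟩, ⟨c₁.q, Or.inr rfl, h⟩]
  obtain ⟨P₂, hP₂, hxP₂⟩ : ∃ P, (P = c₂.p ∨ P = c₂.q) ∧ x ∈ EvoNet.interm P := by
    rcases hx2 with h | h
    exacts [⟨c₂.p, Or.inl rfl, h⟩, ⟨c₂.q, Or.inr rfl, h⟩]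
  obtain ⟨l₁, u₁, b₁, m₁, hd₁⟩ := EvoNet.interm_decomp hxP₁
  obtain ⟨l₂, u₂, b₂, m₂, hd₂⟩ := EvoNet.interm_decomp hxP₂
  have hch₁ : P₁.Chain' N.arc := by
    rcases hP₁ with rfl | rfl
    exacts [c₁.isPath_p.2, c₁.isPath_q.2]
  have hch₂ : P₂.Chain' N.arc := by
    rcases hP₂ with rfl | rfl
    exacts [c₂.isPath_p.2, c₂.isPath_q.2]
  have hux₁ : (u₁, x) ∈ P₁.zip P₁.tail := EvoNet.mem_zip_tail.2 ⟨l₁, b₁ :: m₁, by simp [hd₁]⟩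
  have hux₂ : (u₂, x) ∈ P₂.zip P₂.tail := EvoNet.mem_zip_tail.2 ⟨l₂, b₂ :: m₂, by simp [hd₂]⟩
  have ha₁ : N.arc u₁ x := EvoNet.chain'_rel hch₁ hux₁
  have ha₂ : N.arc u₂ x := EvoNet.chain'_rel hch₂ hux₂
  have hxn₁ : x ∈ c₁.nodes := by
    rcases hP₁ with rfl | rfl
    · exact Or.inl (by rw [hd₁]; simp)
    · exact Or.inr (by rw [hd₁]; simp)
  have hxn₂ : x ∈ c₂.nodes := by
    rcases hP₂ with rfl | rfl
    · exact Or.inl (by rw [hd₂]; simp)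
    · exact Or.inr (by rw [hd₂]; simp)
  have h1e : c₁.hend ∈ EvoNet.everts c₁.arcs :=
    c₁.mem_everts_arcs (Or.inl (by rw [← c₁.getLast_p_eq]; exact List.getLast_mem c₁.p_ne))
  have h2e : c₂.hend ∈ EvoNet.everts c₂.arcs :=
    c₂.mem_everts_arcs (Or.inl (by rw [← c₂.getLast_p_eq]; exact List.getLast_mem c₂.p_ne))
  by_cases huu : u₁ = u₂
  · subst huu
    have hub : ∀ v : V, ∃ w, w ∈ EvoNet.everts (EvoNet.avoid c₁.arcs v) ∧
        w ∈ EvoNet.everts (EvoNet.avoid c₂.arcs v) := by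
      intro v
      by_cases hvx : v = x
      · subst hvx
        exact ⟨u₁, c₁.hub_u hP₁ hd₁, c₂.hub_u hP₂ hd₂⟩
      · exact ⟨x, c₁.hub_x hP₁ hd₁ v hvx, c₂.hub_x hP₂ hd₂ v hvx⟩
    have hw0 : ∃ w, w ∈ EvoNet.everts c₁.arcs ∧ w ∈ EvoNet.everts c₂.arcs :=
      ⟨x, c₁.mem_everts_arcs hxn₁, c₂.mem_everts_arcs hxn₂⟩
    have hbic := EvoNet.union_biconn c₁ c₂ hub hw0
    exact hne (hL _ hbic c₁.hend c₂.hend c₁.hybrid c₂.hybrid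
      (EvoNet.everts_mono Set.subset_union_left h1e)
      (EvoNet.everts_mono Set.subset_union_right h2e))
  · have hxhyb : N.IsHybrid x := ⟨u₁, u₂, huu, ha₁, ha₂⟩
    have hxh : x ≠ c₁.hend := by
      rcases hP₁ with rfl | rfl
      · have h := (EvoNet.interm_ne_of_nodup c₁.p_nodup hxP₁ c₁.p_ne).2
        rwa [c₁.getLast_p_eq] at h
      · have h := (EvoNet.interm_ne_of_nodup c₁.q_nodup hxP₁ c₁.q_ne).2
        rwa [c₁.getLast_q_eq] at h
    exact hxh (hL c₁.arcs c₁.biconn x c₁.hend hxhyb c₁.hybrid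
      (c₁.mem_everts_arcs hxn₁) h1e)
end

section
/- In a 1-nested network, no reticulation cycle contains a hybrid node as an intermediate node. -/
open List Relation

section Helpers

variable {α : Type*} {r : α → α → Prop}

lemma reflTransGen_of_chain'_head :
    ∀ {l : List α} {a b : α}, (a :: l).Chain' r → b ∈ a :: l → Relation.ReflTransGen r a b := by
  intro l
  induction l with
  | nil =>
    intro a b _ hb
    simp only [mem_singleton] at hb
    subst hb; exact .refl
  | cons c t ih =>
    intro a b hc hb
    rcases List.mem_cons.mp hb with rfl | hb'
    · exact .refl
    · exact Relation.ReflTransGen.head (List.isChain_cons_cons.mp hc).1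
        (ih (List.isChain_cons_cons.mp hc).2 hb')

lemma mem_of_getLast?_eq {l : List α} {a : α} (h : l.getLast? = some a) : a ∈ l := by
  obtain ⟨h', rfl⟩ := List.mem_getLast?_eq_getLast (show a ∈ l.getLast? from h)
  exact List.getLast_mem h'

lemma reflTransGen_to_getLast? {l : List α} {a b : α}
    (hc : l.Chain' r) (ha : a ∈ l) (hb : l.getLast? = some b) :
    Relation.ReflTransGen r a b := by
  obtain ⟨s, t, rfl⟩ := List.append_of_mem ha
  have hc2 : (a :: t).Chain' r := (List.isChain_append.mp hc).2.1
  have hb' : (a :: t).getLast? = some b := by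
    rwa [List.getLast?_append_of_ne_nil s (List.cons_ne_nil a t)] at hb
  have hmem : b ∈ a :: t := mem_of_getLast?_eq hb'
  have hgl : (a :: t).getLast (List.cons_ne_nil a t) = b := by
    have := List.getLast?_eq_getLast_of_ne_nil (List.cons_ne_nil a t)
    rw [this] at hb'
    exact (Option.some.inj hb')
  exact reflTransGen_of_chain'_head hc2 hmem

/-- last element of `P` lying in `Q`, with everything after it outside `Q`. -/
lemma exists_last_common (Q : List α) :
    ∀ {P : List α}, (∃ z ∈ P, z ∈ Q) →
      ∃ P₁ s Pt, P = P₁ ++ s :: Pt ∧ s ∈ Q ∧ ∀ z ∈ Pt, z ∉ Q := by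
  intro P
  induction P using List.reverseRecOn with
  | nil => rintro ⟨z, hz, -⟩; simp at hz
  | append_singleton P' a ih =>
    intro hex
    by_cases ha : a ∈ Q
    · exact ⟨P', a, [], rfl, ha, by simp⟩
    · obtain ⟨z, hz, hzQ⟩ := hex
      have hz' : z ∈ P' := by
        rcases List.mem_append.mp hz with h | h
        · exact h
        · simp only [mem_singleton] at h
          subst h; exact absurd hzQ ha
      obtain ⟨P₁, s, Pt, hP, hs, hPt⟩ := ih ⟨z, hz', hzQ⟩
      refine ⟨P₁, s, Pt ++ [a], by rw [hP]; simp, hs, ?_⟩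
      intro y hy
      rcases List.mem_append.mp hy with h | h
      · exact hPt y h
      · simp only [mem_singleton] at h; subst h; exact ha

end Helpers

namespace EvoNet

variable {V : Type*}

lemma chain'_nodup (N : EvoNet V) : ∀ {l : List V}, l.Chain' N.arc → l.Nodup := by
  intro l
  induction l with
  | nil => simp
  | cons a t ih =>
    intro hc
    refine List.nodup_cons.mpr ⟨?_, ih hc.tail⟩
    intro hat
    cases t with
    | nil => simp at hat
    | cons c t' =>
      have h1 : N.arc a c := (List.isChain_cons_cons.mp hc).1
      have h2 : Relation.ReflTransGen N.arc c a :=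
        reflTransGen_of_chain'_head (List.isChain_cons_cons.mp hc).2 hat
      exact N.acyclic a (Relation.TransGen.head' h1 h2)

lemma exists_path_list (N : EvoNet V) {a b : V} (h : Relation.ReflTransGen N.arc a b) :
    ∃ l : List V, l.Chain' N.arc ∧ l.head? = some a ∧ l.getLast? = some b := by
  obtain ⟨l, hl1, hl2⟩ := List.exists_isChain_cons_of_relationReflTransGen h
  exact ⟨a :: l, hl1, rfl,
    by rw [List.getLast?_eq_getLast_of_ne_nil (List.cons_ne_nil _ _), hl2]⟩

lemma mem_interm_append {A B : List V} (hA : A ≠ []) (hB : B ≠ []) {z : V} :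
    z ∈ interm (A ++ B) ↔ z ∈ A.drop 1 ∨ z ∈ B.dropLast := by
  obtain ⟨a, A', rfl⟩ := List.exists_cons_of_ne_nil hA
  show z ∈ ((a :: A' ++ B).drop 1).dropLast ↔ _
  have : (a :: A' ++ B).drop 1 = A' ++ B := rfl
  rw [this, List.dropLast_append, if_neg (by simp [hB])]
  simp

lemma exists_of_mem_interm {p : List V} {x : V} (h : x ∈ interm p) :
    ∃ A B, p = A ++ x :: B ∧ A ≠ [] ∧ B ≠ [] := by
  match p with
  | [] => simp [interm] at h
  | a :: t =>
    have h' : x ∈ t.dropLast := h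
    have ht : t ≠ [] := by rintro rfl; simp at h'
    obtain ⟨X, Y, hxy⟩ := List.append_of_mem h'
    refine ⟨a :: X, Y ++ [t.getLast ht], ?_, by simp, by simp⟩
    have hd : t.dropLast ++ [t.getLast ht] = t := List.dropLast_append_getLast ht
    rw [show a :: t = a :: (t.dropLast ++ [t.getLast ht]) from by rw [hd], hxy]
    simp

def RetCycle.symm {N : EvoNet V} (c : RetCycle N) : RetCycle N where
  hend := c.hend
  p := c.q
  q := c.p
  isPath_p := c.isPath_q
  isPath_q := c.isPath_p
  len_p := c.len_q
  len_q := c.len_p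
  same_origin := c.same_origin.symm
  last_p := c.last_q
  last_q := c.last_p
  hybrid := c.hybrid
  intDisjoint := fun x hq hp => c.intDisjoint x hp hq
  ne := fun h => c.ne h.symm

end EvoNet


namespace EvoNet

lemma opt_mem_eq {α : Type*} {a b : α} (h : a ∈ some b) : a = b :=
  (Option.some.inj (Option.mem_def.mp h)).symm

lemma core {V : Type*} (N : EvoNet V) (h1n : N.OneNested) (c : RetCycle N) (x : V)
    (hx : N.IsHybrid x) (hxp : x ∈ interm c.p) : False := by
  obtain ⟨A, B, hcp, hA, hB⟩ := exists_of_mem_interm hxp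
  have hchp : c.p.Chain' N.arc := c.isPath_p.2
  have hchp' : (A ++ x :: B).Chain' N.arc := hcp ▸ hchp
  set u := A.getLast hA with hu
  have hAu : A.getLast? = some u := List.getLast?_eq_getLast_of_ne_nil hA
  have harc_ux : N.arc u x :=
    (List.isChain_append.mp hchp').2.2 u hAu x rfl
  -- second parent
  obtain ⟨pa, pb, hpab, hpa, hpb⟩ := hx
  obtain ⟨w, hwu, harc_wx⟩ : ∃ w, w ≠ u ∧ N.arc w x := by
    by_cases h : pa = u
    · exact ⟨pb, by rw [← h]; exact hpab.symm, hpb⟩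
    · exact ⟨pa, h, hpa⟩
  have hchA : A.Chain' N.arc := (List.isChain_append.mp hchp').1
  have hchxB : (x :: B).Chain' N.arc := (List.isChain_append.mp hchp').2.1
  set s₀ := A.head hA with hs₀
  have hA0 : A.head? = some s₀ := by
    rw [hs₀, ← List.head?_eq_head]
  -- list path R from root to s₀
  obtain ⟨R, hchR, hRh, hRl⟩ := N.exists_path_list (N.rooted s₀)
  set P := R.dropLast ++ A with hP
  have hRd : R.dropLast ++ [s₀] = R := List.dropLast_append_getLast? s₀ hRl
  have hchRd : (R.dropLast ++ [s₀]).Chain' N.arc := by rw [hRd]; exact hchR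
  have hchP : P.Chain' N.arc := by
    refine List.isChain_append.mpr ⟨(List.isChain_append.mp hchRd).1, hchA, ?_⟩
    intro a ha b hb
    rw [hA0] at hb
    obtain rfl : b = s₀ := opt_mem_eq hb
    exact (List.isChain_append.mp hchRd).2.2 a ha s₀ rfl
  have hPl : P.getLast? = some u := by
    rw [hP, List.getLast?_append_of_ne_nil _ hA, hAu]
  have hxP : x ∉ P := fun hmem =>
    N.acyclic x (Relation.TransGen.tail' (reflTransGen_to_getLast? hchP hmem hPl) harc_ux)
  -- list path Q from root to w
  obtain ⟨Q, hchQ, hQh, hQl⟩ := N.exists_path_list (N.rooted w)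
  have hxQ : x ∉ Q := fun hmem =>
    N.acyclic x (Relation.TransGen.tail' (reflTransGen_to_getLast? hchQ hmem hQl) harc_wx)
  -- root is common to P and Q
  have hroot : ∃ z ∈ P, z ∈ Q := by
    refine ⟨N.root, ?_, List.mem_of_mem_head? (by rw [hQh]; rfl)⟩
    have hRmem : N.root ∈ R := List.mem_of_mem_head? (by rw [hRh]; rfl)
    rw [← hRd] at hRmem
    rcases List.mem_append.mp hRmem with h | h
    · exact List.mem_append.mpr (Or.inl h)
    · simp only [List.mem_singleton] at h
      rw [h]
      exact List.mem_append.mpr (Or.inr (List.head_mem hA))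
  obtain ⟨P₁, s, Pt, hPdec, hsQ, hPtQ⟩ := exists_last_common Q hroot
  obtain ⟨Q₁, Q₂, hQdec⟩ := List.append_of_mem hsQ
  have hchPs : (s :: Pt).Chain' N.arc := by
    have : P.Chain' N.arc := hchP
    rw [hPdec] at this
    exact (List.isChain_append.mp this).2.1
  have hchQs : (s :: Q₂).Chain' N.arc := by
    have : Q.Chain' N.arc := hchQ
    rw [hQdec] at this
    exact (List.isChain_append.mp this).2.1
  have hPsl : (s :: Pt).getLast? = some u := by
    rw [hPdec, List.getLast?_append_of_ne_nil _ (List.cons_ne_nil s Pt)] at hPl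
    exact hPl
  have hQsl : (s :: Q₂).getLast? = some w := by
    rw [hQdec, List.getLast?_append_of_ne_nil _ (List.cons_ne_nil s Q₂)] at hQl
    exact hQl
  -- the reticulation cycle D for x
  set Dp := (s :: Pt) ++ [x] with hDp
  set Dq := (s :: Q₂) ++ [x] with hDq
  have hchDp : Dp.Chain' N.arc := by
    refine List.isChain_append.mpr ⟨hchPs, List.isChain_singleton x, ?_⟩
    intro a ha b hb
    rw [hPsl] at ha
    obtain rfl : a = u := opt_mem_eq ha
    obtain rfl : b = x := opt_mem_eq hb
    exact harc_ux
  have hchDq : Dq.Chain' N.arc := by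
    refine List.isChain_append.mpr ⟨hchQs, List.isChain_singleton x, ?_⟩
    intro a ha b hb
    rw [hQsl] at ha
    obtain rfl : a = w := opt_mem_eq ha
    obtain rfl : b = x := opt_mem_eq hb
    exact harc_wx
  have hiDp : ∀ z, z ∈ interm Dp ↔ z ∈ Pt := by
    intro z
    rw [hDp, mem_interm_append (List.cons_ne_nil s Pt) (List.cons_ne_nil x [])]
    simp
  have hiDq : ∀ z, z ∈ interm Dq ↔ z ∈ Q₂ := by
    intro z
    rw [hDq, mem_interm_append (List.cons_ne_nil s Q₂) (List.cons_ne_nil x [])]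
    simp
  have hDint : ∀ z : V, z ∈ interm Dp → z ∉ interm Dq := by
    intro z hz hz'
    have hz1 : z ∈ Pt := (hiDp z).mp hz
    have hz2 : z ∈ Q₂ := (hiDq z).mp hz'
    exact hPtQ z hz1 (by rw [hQdec]; exact List.mem_append.mpr (Or.inr (List.mem_cons.mpr (Or.inr hz2))))
  have hDne : Dp ≠ Dq := by
    intro hEq
    have h1 : (s :: Pt) = (s :: Q₂) := by
      have := congrArg List.dropLast hEq
      rwa [hDp, hDq, List.dropLast_concat, List.dropLast_concat] at this
    have h2 : some u = some w := by rw [← hPsl, ← hQsl, h1]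
    exact hwu (Option.some.inj h2).symm
  -- x ≠ c.hend
  have hnodup : (A ++ x :: B).Nodup := hcp ▸ N.chain'_nodup hchp
  have hxh : x ≠ c.hend := by
    intro hEq
    have hlast : (A ++ x :: B).getLast? = some c.hend := hcp ▸ c.last_p
    rw [List.getLast?_append_of_ne_nil _ (List.cons_ne_nil x B),
      show (x :: B) = [x] ++ B from rfl, List.getLast?_append_of_ne_nil _ hB] at hlast
    have hmemB : c.hend ∈ B := mem_of_getLast?_eq hlast
    have hxB : x ∉ B := (List.nodup_cons.mp hnodup.of_append_right).1
    exact hxB (hEq ▸ hmemB)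
  -- the cycle D for x
  set DD : RetCycle N := ⟨x, Dp, Dq, ⟨by simp [hDp], hchDp⟩, ⟨by simp [hDq], hchDq⟩,
      by simp [hDp], by simp [hDq], rfl,
      by rw [hDp]; exact List.getLast?_concat, by rw [hDq]; exact List.getLast?_concat,
      ⟨pa, pb, hpab, hpa, hpb⟩, hDint, hDne⟩ with hDD
  -- apply 1-nestedness to D and c
  have hstar : ∀ z : V, z ∈ interm Dp ∪ interm Dq → z ∉ c.intermNodes :=
    h1n DD c hxh
  -- membership facts about interm c.p
  have hicp : ∀ z, z ∈ interm c.p ↔ z ∈ A.drop 1 ∨ z ∈ (x :: B).dropLast := by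
    intro z
    rw [hcp, mem_interm_append hA (List.cons_ne_nil x B)]
  have hxdl : x ∈ (x :: B).dropLast := by
    obtain ⟨b0, B', rfl⟩ := List.exists_cons_of_ne_nil hB
    rw [List.dropLast_cons₂]
    exact List.mem_cons_self
  by_cases hPt : Pt = []
  · -- CASE I : s = u, so u ∈ Q and the path Q continues from u to w
    subst hPt
    have hsu : s = u := Option.some.inj (by simpa using hPsl)
    have hQ2 : Q₂ ≠ [] := by
      rintro rfl
      have hsw : s = w := Option.some.inj (by simpa using hQsl)
      exact hwu (hsw.symm.trans hsu)
    obtain ⟨q0, Q₂', hq0⟩ := List.exists_cons_of_ne_nil hQ2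
    have hQ2l : Q₂.getLast? = some w := by
      rw [show s :: Q₂ = [s] ++ Q₂ from rfl, List.getLast?_append_of_ne_nil _ hQ2] at hQsl
      exact hQsl
    set p₂ := A ++ (Q₂ ++ (x :: B)) with hp₂
    have hchQ2 : Q₂.Chain' N.arc := hchQs.tail
    have harc_uq0 : N.arc u q0 := by
      have h1 : N.arc s q0 := (List.isChain_cons_cons.mp (hq0 ▸ hchQs)).1
      exact hsu ▸ h1
    have hchp₂ : p₂.Chain' N.arc := by
      refine List.isChain_append.mpr ⟨hchA, List.isChain_append.mpr ⟨hchQ2, hchxB, ?_⟩, ?_⟩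
      · intro a ha b hb
        rw [hQ2l] at ha
        obtain rfl : a = w := opt_mem_eq ha
        obtain rfl : b = x := opt_mem_eq hb
        exact harc_wx
      · intro a ha b hb
        rw [hAu] at ha
        obtain rfl : a = u := opt_mem_eq ha
        rw [List.head?_append_of_ne_nil _ hQ2, hq0] at hb
        obtain rfl : b = q0 := opt_mem_eq hb
        exact harc_uq0
    have hip₂ : ∀ z, z ∈ interm p₂ ↔ z ∈ A.drop 1 ∨ (z ∈ Q₂ ∨ z ∈ (x :: B).dropLast) := by
      intro z
      rw [hp₂, mem_interm_append hA (by simp), List.dropLast_append, if_neg (by simp),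
        List.mem_append]
    have hq2mem : ∀ z ∈ Q₂, z ∉ c.intermNodes := fun z hz =>
      hstar z (Or.inr ((hiDq z).mpr hz))
    have hintd₂ : ∀ z : V, z ∈ interm p₂ → z ∉ interm c.q := by
      intro z hz
      rcases (hip₂ z).mp hz with h | h | h
      · exact fun hq => c.intDisjoint z ((hicp z).mpr (Or.inl h)) hq
      · exact fun hq => hq2mem z h (Or.inr hq)
      · exact fun hq => c.intDisjoint z ((hicp z).mpr (Or.inr h)) hq
    have hxip₂ : x ∈ interm p₂ := (hip₂ x).mpr (Or.inr (Or.inr hxdl))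
    have hne₂ : p₂ ≠ c.q := fun hEq => c.intDisjoint x hxp (hEq ▸ hxip₂)
    have hhead₂ : p₂.head? = c.q.head? := by
      rw [hp₂, List.head?_append_of_ne_nil _ hA, ← c.same_origin, hcp,
        List.head?_append_of_ne_nil _ hA]
    have hlast₂ : p₂.getLast? = some c.hend := by
      have h1 := c.last_p
      rw [hcp, List.getLast?_append_of_ne_nil _ (List.cons_ne_nil x B)] at h1
      rw [hp₂, List.getLast?_append_of_ne_nil _ (by simp : Q₂ ++ (x :: B) ≠ []),
        List.getLast?_append_of_ne_nil _ (List.cons_ne_nil x B)]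
      exact h1
    have hlen₂ : 2 ≤ p₂.length := by
      have h1 : 1 ≤ A.length := List.length_pos_iff.mpr hA
      rw [hp₂]
      simp only [List.length_append, List.length_cons]
      omega
    have hwQ2 : w ∈ Q₂ := mem_of_getLast?_eq hQ2l
    exact h1n ⟨c.hend, p₂, c.q, ⟨by rw [hp₂]; simp [hA], hchp₂⟩, c.isPath_q, hlen₂, c.len_q,
        hhead₂, hlast₂, c.last_q, c.hybrid, hintd₂, hne₂⟩ DD (Ne.symm hxh) w
      (Or.inl ((hip₂ w).mpr (Or.inr (Or.inl hwQ2))))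
      (Or.inr ((hiDq w).mpr hwQ2))
  · -- CASE II : Pt ≠ [], so u ∈ Pt
    have hPtl : Pt.getLast? = some u := by
      rw [show s :: Pt = [s] ++ Pt from rfl, List.getLast?_append_of_ne_nil _ hPt] at hPsl
      exact hPsl
    have huPt : u ∈ Pt := mem_of_getLast?_eq hPtl
    by_cases hA1 : A.drop 1 = []
    · -- CASE II.b : A = [s₀]
      have hAt : A.tail = [] := by rwa [List.drop_one] at hA1
      have hAeq : A = [s₀] := by
        conv_lhs => rw [← List.cons_head_tail hA]
        rw [hAt, hs₀]
      have hus₀ : u = s₀ := by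
        have h1 := hAu
        rw [hAeq] at h1
        exact (Option.some.inj h1).symm
      have hq0' : c.q.head? = some s₀ := by
        rw [← c.same_origin, hcp, List.head?_append_of_ne_nil _ hA, hA0]
      have hcqne : c.q ≠ [] := by
        intro h; rw [h] at hq0'; simp at hq0'
      obtain ⟨a, qt, hq⟩ := List.exists_cons_of_ne_nil hcqne
      rw [hq] at hq0'
      obtain rfl : a = s₀ := by simpa using hq0'
      have hqt : qt ≠ [] := by
        have h1 := c.len_q
        rw [hq] at h1
        intro h; rw [h] at h1; simp at h1
      have hchcq : (s₀ :: qt).Chain' N.arc := hq ▸ c.isPath_q.2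
      have hqtl : qt.getLast? = some c.hend := by
        have h1 := c.last_q
        rw [hq, show s₀ :: qt = [s₀] ++ qt from rfl,
          List.getLast?_append_of_ne_nil _ hqt] at h1
        exact h1
      have hicq : ∀ z, z ∈ interm c.q ↔ z ∈ qt.dropLast := by
        intro z
        rw [hq, show s₀ :: qt = [s₀] ++ qt from rfl,
          mem_interm_append (List.cons_ne_nil s₀ []) hqt]
        simp
      set p₂ := (s :: Q₂) ++ (x :: B) with hp₂
      set q₂ := (s :: Pt) ++ qt with hq₂
      have hchp₂ : p₂.Chain' N.arc := by
        refine List.isChain_append.mpr ⟨hchQs, hchxB, ?_⟩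
        intro a ha b hb
        rw [hQsl] at ha
        obtain rfl : a = w := opt_mem_eq ha
        obtain rfl : b = x := opt_mem_eq hb
        exact harc_wx
      obtain ⟨q1, qt', hqt1⟩ := List.exists_cons_of_ne_nil hqt
      have hchq₂ : q₂.Chain' N.arc := by
        refine List.isChain_append.mpr ⟨hchPs, hchcq.tail, ?_⟩
        intro a ha b hb
        rw [hPsl] at ha
        rw [hqt1] at hb
        have h1 : N.arc s₀ q1 := (List.isChain_cons_cons.mp (hqt1 ▸ hchcq)).1
        rw [opt_mem_eq ha, opt_mem_eq hb, hus₀]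
        exact h1
      have hip₂ : ∀ z, z ∈ interm p₂ ↔ z ∈ Q₂ ∨ z ∈ (x :: B).dropLast := by
        intro z
        rw [hp₂, mem_interm_append (List.cons_ne_nil s Q₂) (List.cons_ne_nil x B)]
        simp
      have hiq₂ : ∀ z, z ∈ interm q₂ ↔ z ∈ Pt ∨ z ∈ qt.dropLast := by
        intro z
        rw [hq₂, mem_interm_append (List.cons_ne_nil s Pt) hqt]
        simp
      have hintd₂ : ∀ z : V, z ∈ interm p₂ → z ∉ interm q₂ := by
        intro z hz hz'
        rcases (hip₂ z).mp hz with h | h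
        · rcases (hiq₂ z).mp hz' with h' | h'
          · exact hPtQ z h' (by
              rw [hQdec]
              exact List.mem_append.mpr (Or.inr (List.mem_cons.mpr (Or.inr h))))
          · exact hstar z (Or.inr ((hiDq z).mpr h)) (Or.inr ((hicq z).mpr h'))
        · rcases (hiq₂ z).mp hz' with h' | h'
          · exact hstar z (Or.inl ((hiDp z).mpr h')) (Or.inl ((hicp z).mpr (Or.inr h)))
          · exact c.intDisjoint z ((hicp z).mpr (Or.inr h)) ((hicq z).mpr h')
      have hne₂ : p₂ ≠ q₂ := by
        intro hEq
        have hx2 : x ∈ interm q₂ := hEq ▸ ((hip₂ x).mpr (Or.inr hxdl))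
        rcases (hiq₂ x).mp hx2 with h | h
        · exact hxP (by
            rw [hPdec]
            exact List.mem_append.mpr (Or.inr (List.mem_cons.mpr (Or.inr h))))
        · exact c.intDisjoint x hxp ((hicq x).mpr h)
      have hlast₂p : p₂.getLast? = some c.hend := by
        have h1 := c.last_p
        rw [hcp, List.getLast?_append_of_ne_nil _ (List.cons_ne_nil x B)] at h1
        rw [hp₂, List.getLast?_append_of_ne_nil _ (List.cons_ne_nil x B)]
        exact h1
      have hlast₂q : q₂.getLast? = some c.hend := by
        rw [hq₂, List.getLast?_append_of_ne_nil _ hqt]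
        exact hqtl
      have hs₀q₂ : s₀ ∈ interm q₂ := (hiq₂ s₀).mpr (Or.inl (hus₀ ▸ huPt))
      have hs₀D : s₀ ∈ interm Dp := (hiDp s₀).mpr (hus₀ ▸ huPt)
      exact h1n ⟨c.hend, p₂, q₂, ⟨by rw [hp₂]; simp, hchp₂⟩, ⟨by rw [hq₂]; simp, hchq₂⟩,
          by rw [hp₂]; simp; omega, by have h1 : 1 ≤ qt.length := List.length_pos_iff.mpr hqt; rw [hq₂]; simp; omega, rfl,
          hlast₂p, hlast₂q, c.hybrid, hintd₂, hne₂⟩ DD (Ne.symm hxh) s₀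
        (Or.inr hs₀q₂) (Or.inl hs₀D)
    · -- CASE II.a : u itself is a shared intermediate node
      have huA : u ∈ A.drop 1 := by
        have hAt : A.tail ≠ [] := by rwa [List.drop_one] at hA1
        have h1 : A.getLast? = A.tail.getLast? := by
          conv_lhs => rw [← List.cons_head_tail hA]
          rw [show A.head hA :: A.tail = [A.head hA] ++ A.tail from rfl,
            List.getLast?_append_of_ne_nil _ hAt]
        rw [List.drop_one]
        exact mem_of_getLast?_eq (by rw [← h1]; exact hAu)
      exact hstar u (Or.inl ((hiDp u).mpr huPt)) (Or.inl ((hicp u).mpr (Or.inl huA)))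

end EvoNet


theorem oneNested_no_intermediate_hybrid {V : Type*} (N : EvoNet V)
    (h1n : N.OneNested) :
    ∀ c : EvoNet.RetCycle N, ∀ x : V, N.IsHybrid x → x ∉ c.intermNodes := by
  intro c x hx hmem
  rcases hmem with h | h
  · exact EvoNet.core N h1n c x hx h
  · exact EvoNet.core N h1n c.symm x hx h
end

section
/- Every 1-nested network without out-degree 1 tree nodes is tree-child: every internal node has at least one child of tree type (in-degree at most 1). -/
namespace EvoNet
variable {V : Type*}

/-- sandwich: from two decompositions. -/
lemma sandwich {α : Type*} {L₁ L₂ B S : List α} {s z : α}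
    (h : L₁ ++ s :: L₂ = B ++ z :: S) (hs : s ∉ z :: S) : z ∈ L₂ := by
  rcases List.append_eq_append_iff.mp h with ⟨a', ha, hb⟩ | ⟨c', hc, hd⟩
  · cases a' with
    | nil =>
      simp only [List.nil_append] at hb
      exact absurd (hb ▸ List.mem_cons_self (a := s) (l := L₂)) hs
    | cons x xs =>
      rw [List.cons_append] at hb
      obtain ⟨rfl, h2⟩ := List.cons_eq_cons.mp hb
      exact h2 ▸ List.mem_append_right xs (List.mem_cons_self (a := z) (l := S))
  · exact absurd (hd ▸ List.mem_append_right c' (List.mem_cons_self (a := s) (l := L₂))) hs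

/-- find the last element of W that lies in R. -/
lemma findLast {α : Type*} {R : List α} : ∀ {W : List α}, (∃ x ∈ W, x ∈ R) →
    ∃ W₁ s W₂, W = W₁ ++ s :: W₂ ∧ s ∈ R ∧ ∀ z ∈ W₂, z ∉ R := by
  intro W
  induction W with
  | nil => rintro ⟨x, hx, -⟩; simp at hx
  | cons a T ih =>
    intro hex
    by_cases hT : ∃ x ∈ T, x ∈ R
    · obtain ⟨W₁, s, W₂, rfl, hs, hz⟩ := ih hT
      exact ⟨a :: W₁, s, W₂, rfl, hs, hz⟩
    · push_neg at hT
      obtain ⟨x, hx, hxR⟩ := hex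
      rcases List.mem_cons.mp hx with rfl | hx'
      · exact ⟨[], x, T, rfl, hxR, hT⟩
      · exact absurd hxR (hT x hx')

lemma chain'_cons_transGen (N : EvoNet V) : ∀ {S : List V} {x y : V},
    (x :: S).Chain' N.arc → y ∈ S → Relation.TransGen N.arc x y := by
  intro S
  induction S with
  | nil => simp
  | cons a T ih =>
    intro x y hch hy
    rw [List.Chain', List.isChain_cons_cons] at hch
    rcases List.mem_cons.mp hy with rfl | hy'
    · exact .single hch.1
    · exact Relation.TransGen.head hch.1 (ih hch.2 hy')

lemma chain'_mid (N : EvoNet V) {L B S : List V} {x : V}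
    (hch : L.Chain' N.arc) (hL : L = B ++ x :: S) : (x :: S).Chain' N.arc :=
  (List.isChain_append.mp (hL ▸ hch)).2.1

lemma no_revisit (N : EvoNet V) {L B S : List V} {x y : V} (hch : L.Chain' N.arc)
    (hL : L = B ++ x :: S) (hyB : y ∈ B) (hyS : y ∈ x :: S) : False := by
  obtain ⟨B₁, B₂, rfl⟩ := List.append_of_mem hyB
  have h2 : L = B₁ ++ y :: (B₂ ++ x :: S) := by simp [hL]
  have := N.chain'_cons_transGen (N.chain'_mid hch h2) (List.mem_append_right B₂ hyS)
  exact N.acyclic y this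

lemma chain'_cons_rtg (N : EvoNet V) : ∀ {K : List V} {x w : V},
    (x :: K).Chain' N.arc → (x :: K).getLast? = some w → Relation.ReflTransGen N.arc x w := by
  intro K
  induction K with
  | nil => intro x w _ h; simp at h; exact h ▸ .refl
  | cons a T ih =>
    intro x w hch hl
    rw [List.Chain', List.isChain_cons_cons] at hch
    exact .head hch.1 (ih hch.2 hl)

lemma rtg_chain (N : EvoNet V) {a b : V} (h : Relation.ReflTransGen N.arc a b) :
    ∃ L : List V, L ≠ [] ∧ L.Chain' N.arc ∧ L.head? = some a ∧ L.getLast? = some b := by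
  induction h with
  | refl => exact ⟨[a], by simp, List.isChain_singleton _, by simp, by simp⟩
  | @tail b' c hab harc ih =>
    obtain ⟨L, hne, hch, hh, hl⟩ := ih
    refine ⟨L ++ [c], by simp, ?_, ?_, by simp⟩
    · rw [List.Chain', List.isChain_append]
      refine ⟨hch, List.isChain_singleton _, ?_⟩
      intro x hx y hy
      simp only [List.head?_cons, Option.mem_def, Option.some.injEq] at hy
      rw [hl] at hx
      simp only [Option.mem_def, Option.some.injEq] at hx
      subst hx; subst hy; exact harc
    · cases L with
      | nil => simp at hne
      | cons c T => simpa using hh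

lemma arc_ne (N : EvoNet V) {a b : V} (h : N.arc a b) : a ≠ b := by
  rintro rfl; exact N.acyclic a (.single h)


lemma core_s7 (N : EvoNet V) {R W : List V} {u w h : V}
    (hRne : R ≠ []) (hRch : R.Chain' N.arc)
    (hWne : W ≠ []) (hWch : W.Chain' N.arc)
    (hhead : R.head? = W.head?)
    (hRu : R.getLast? = some u) (hWw : W.getLast? = some w)
    (huw : u ≠ w) (hu : N.arc u h) (hw : N.arc w h) (hhyb : N.IsHybrid h) :
    ∃ c : RetCycle N, c.hend = h ∧
      (∀ z B S, R = B ++ z :: S → (∀ y ∈ z :: S, y ∉ W) → z ∈ c.intermNodes) ∧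
      (∀ z B S, W = B ++ z :: S → (∀ y ∈ z :: S, y ∉ R) → z ∈ c.intermNodes) := by
  -- the head of W is in R
  have hex : ∃ x ∈ W, x ∈ R := by
    cases R with
    | nil => exact absurd rfl hRne
    | cons r R' =>
      cases W with
      | nil => exact absurd rfl hWne
      | cons r' W' =>
        simp only [List.head?_cons, Option.some.injEq] at hhead
        exact ⟨r', List.mem_cons_self, hhead ▸ List.mem_cons_self⟩
  obtain ⟨W₁, s, W₂, hWdec, hsR, hW₂⟩ := findLast hex
  obtain ⟨R₁, R₂, hRdec⟩ := List.append_of_mem hsR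
  have hsW : s ∈ W := hWdec ▸ List.mem_append_right W₁ (List.mem_cons_self (a := s) (l := W₂))
  -- last facts
  have hlastR : (s :: R₂).getLast? = some u := by
    rw [hRdec, List.getLast?_append_cons] at hRu; exact hRu
  have hlastW : (s :: W₂).getLast? = some w := by
    rw [hWdec, List.getLast?_append_cons] at hWw; exact hWw
  have hchR : (s :: R₂).Chain' N.arc := N.chain'_mid hRch hRdec
  have hchW : (s :: W₂).Chain' N.arc := N.chain'_mid hWch hWdec
  have hchp : ((s :: R₂) ++ [h]).Chain' N.arc := by
    rw [List.Chain', List.isChain_append]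
    refine ⟨hchR, List.isChain_singleton _, ?_⟩
    intro x hx y hy
    rw [hlastR] at hx
    simp only [Option.mem_def, Option.some.injEq, List.head?_cons] at hx hy
    subst hx; subst hy; exact hu
  have hchq : ((s :: W₂) ++ [h]).Chain' N.arc := by
    rw [List.Chain', List.isChain_append]
    refine ⟨hchW, List.isChain_singleton _, ?_⟩
    intro x hx y hy
    rw [hlastW] at hx
    simp only [Option.mem_def, Option.some.injEq, List.head?_cons] at hx hy
    subst hx; subst hy; exact hw
  have hip : interm ((s :: R₂) ++ [h]) = {x | x ∈ R₂} := by
    simp [interm]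
  have hiq : interm ((s :: W₂) ++ [h]) = {x | x ∈ W₂} := by
    simp [interm]
  have glast : ∀ (L : List V) (x : V), (L ++ [x]).getLast? = some x := by simp
  refine ⟨⟨h, (s :: R₂) ++ [h], (s :: W₂) ++ [h], ⟨by simp, hchp⟩, ⟨by simp, hchq⟩,
    by simp, by simp, by simp, glast (s :: R₂) h, glast (s :: W₂) h, hhyb, ?_, ?_⟩, rfl, ?_, ?_⟩
  · intro x hx
    rw [hip] at hx; rw [hiq]
    exact fun hx2 => hW₂ x hx2 (hRdec ▸ List.mem_append_right R₁ (List.mem_cons_of_mem s hx))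
  · intro heq
    have h1 : s :: R₂ = s :: W₂ := by
      have h2 := congrArg List.dropLast heq
      rwa [show (s :: R₂ ++ [h]).dropLast = ((s :: R₂) ++ [h]).dropLast from rfl,
        show (s :: W₂ ++ [h]).dropLast = ((s :: W₂) ++ [h]).dropLast from rfl,
        List.dropLast_concat, List.dropLast_concat] at h2
    rw [h1, hlastW] at hlastR
    exact huw (Option.some.injEq .. ▸ hlastR.symm ▸ rfl)
  · intro z B S hzdec hzW
    have : z ∈ R₂ := sandwich (hRdec.symm.trans hzdec) (fun hmem => hzW s hmem hsW)
    show z ∈ interm _ ∪ interm _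
    left; rw [hip]; exact this
  · intro z B S hzdec hzR
    have : z ∈ W₂ := sandwich (hWdec.symm.trans hzdec) (fun hmem => hzR s hmem hsR)
    show z ∈ interm _ ∪ interm _
    right; rw [hiq]; exact this

lemma head?_append_left {α : Type*} {l₁ l₂ : List α} (h : l₁ ≠ []) :
    (l₁ ++ l₂).head? = l₁.head? := by cases l₁ <;> simp_all

lemma eq_append_last {α : Type*} {L : List α} {v : α} (h : L.getLast? = some v) :
    ∃ B, L = B ++ [v] := by
  have hne : L ≠ [] := by rintro rfl; simp at h
  refine ⟨L.dropLast, ?_⟩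
  conv_lhs => rw [← List.dropLast_append_getLast hne]
  rw [List.getLast?_eq_getLast hne, Option.some.injEq] at h
  rw [h]

/-- A chain of arcs from the root ending at `w`. -/
def RootChainTo (N : EvoNet V) (W : List V) (w : V) : Prop :=
  W ≠ [] ∧ W.Chain' N.arc ∧ W.head? = some N.root ∧ W.getLast? = some w

lemma rootChainTo_exists (N : EvoNet V) (w : V) : ∃ W, N.RootChainTo W w := by
  obtain ⟨L, h1, h2, h3, h4⟩ := N.rtg_chain (N.rooted w)
  exact ⟨L, h1, h2, h3, h4⟩

/-- A child `h` of `v` is good if some other parent of `h` is reachable from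
the root by a chain avoiding `v`. -/
def GoodChild (N : EvoNet V) (v h : V) : Prop :=
  ∃ w W, N.arc w h ∧ w ≠ v ∧ N.RootChainTo W w ∧ v ∉ W

/-- A good child yields a reticulation cycle with `v` intermediate. -/
lemma interm_of_avoid (N : EvoNet V) {v h w : V} {W : List V}
    (hvh : N.arc v h) (hwh : N.arc w h) (hwv : w ≠ v) (hW : N.RootChainTo W w)
    (hvW : v ∉ W) (hhyb : N.IsHybrid h) :
    ∃ c : RetCycle N, c.hend = h ∧ v ∈ c.intermNodes := by
  obtain ⟨R, hRne, hRch, hRh, hRl⟩ := N.rtg_chain (N.rooted v)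
  obtain ⟨c, hc, hmemR, -⟩ := N.core_s7 hRne hRch hW.1 hW.2.1 (hRh.trans hW.2.2.1.symm)
    hRl hW.2.2.2 (Ne.symm hwv) hvh hwh hhyb
  obtain ⟨B, hB⟩ := eq_append_last hRl
  refine ⟨c, hc, hmemR v B [] (by simpa using hB) ?_⟩
  intro y hy
  simp only [List.mem_singleton] at hy
  subst hy; exact hvW

/-- Variant: a parent `t` of `v` avoiding the witness chain is intermediate. -/
lemma interm_parent (N : EvoNet V) {v h w t : V} {W : List V}
    (hvh : N.arc v h) (hwh : N.arc w h) (hwv : w ≠ v) (hhyb : N.IsHybrid h)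
    (hW : N.RootChainTo W w) (hvW : v ∉ W) (htv : N.arc t v) (htW : t ∉ W) :
    ∃ c : RetCycle N, c.hend = h ∧ t ∈ c.intermNodes := by
  obtain ⟨ρ, hρne, hρch, hρhd, hρl⟩ := N.rtg_chain (N.rooted t)
  have hRch : (ρ ++ [v]).Chain' N.arc := by
    rw [List.Chain', List.isChain_append]
    refine ⟨hρch, List.isChain_singleton _, ?_⟩
    intro x hx y hy
    rw [hρl] at hx
    simp only [Option.mem_def, Option.some.injEq, List.head?_cons] at hx hy
    subst hx; subst hy; exact htv
  obtain ⟨c, hc, hmemR, -⟩ := N.core_s7 (R := ρ ++ [v]) (W := W) (by simp)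
    hRch hW.1 hW.2.1 (by rw [head?_append_left hρne, hρhd, hW.2.2.1])
    (by simp) hW.2.2.2 (Ne.symm hwv) hvh hwh hhyb
  obtain ⟨B, hB⟩ := eq_append_last hρl
  refine ⟨c, hc, hmemR t B [v] (by rw [hB]; simp) ?_⟩
  intro y hy
  rcases List.mem_cons.mp hy with rfl | hy'
  · exact htW
  · simp only [List.mem_singleton] at hy'
    subst hy'; exact hvW

/-- Structure extracted from a non-good child. -/
lemma ng (N : EvoNet V) {v h : V} (hvh : N.arc v h) (hhyb : N.IsHybrid h)
    (hng : ¬ N.GoodChild v h) :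
    ∃ w x K', N.arc w h ∧ w ≠ v ∧ (v :: x :: K').Chain' N.arc ∧
      (x :: K').getLast? = some w ∧ N.arc v x ∧ x ≠ h ∧ v ∉ x :: K' := by
  obtain ⟨p₁, p₂, hp, hp1, hp2⟩ := hhyb
  have hwex : ∃ w, N.arc w h ∧ w ≠ v := by
    by_cases h1 : p₁ = v
    · exact ⟨p₂, hp2, fun e => hp (h1.trans e.symm)⟩
    · exact ⟨p₁, hp1, h1⟩
  obtain ⟨w, hwh, hwv⟩ := hwex
  obtain ⟨Wr, hWr⟩ := N.rootChainTo_exists w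
  have hvW : v ∈ Wr := by
    by_contra hvW
    exact hng ⟨w, Wr, hwh, hwv, hWr, hvW⟩
  obtain ⟨B, S, hdec⟩ := List.append_of_mem hvW
  have hchS : (v :: S).Chain' N.arc := N.chain'_mid hWr.2.1 hdec
  have hlS : (v :: S).getLast? = some w := by
    have := hWr.2.2.2
    rwa [hdec, List.getLast?_append_cons] at this
  cases S with
  | nil => simp only [List.getLast?_singleton, Option.some.injEq] at hlS
           exact absurd hlS.symm hwv
  | cons x K' =>
    have hvx : N.arc v x := (List.isChain_cons_cons.mp hchS).1
    have hvK : v ∉ x :: K' := fun hm => N.acyclic v (N.chain'_cons_transGen hchS hm)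
    have hlK : (x :: K').getLast? = some w := by simpa using hlS
    have hxh : x ≠ h := by
      rintro rfl
      have hrtg := N.chain'_cons_rtg ((List.isChain_cons_cons.mp hchS).2) hlK
      exact N.acyclic _ (Relation.TransGen.tail' hrtg hwh)
    exact ⟨w, x, K', hwh, hwv, hchS, hlK, hvx, hxh, hvK⟩

end EvoNet

theorem oneNested_treeChild {V : Type*} (N : EvoNet V)
    (h1n : N.OneNested)
    (hout : ∀ v : V, N.IsTreeNode v → ¬ (∃! w : V, N.arc v w)) :
    ∀ v : V, N.IsInternal v → ∃ w : V, N.arc v w ∧ N.IsTreeNode w := by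
  intro v hv
  by_contra hcon
  push_neg at hcon
  have hchild : ∀ w, N.arc v w → N.IsHybrid w := by
    intro w hw
    exact not_not.mp (hcon w hw)
  obtain ⟨c₀, hc₀⟩ := hv
  have hc₀hyb := hchild c₀ hc₀
  have hc₀v : c₀ ≠ v := (N.arc_ne hc₀).symm
  by_cases hall : ∀ h', N.arc v h' → N.GoodChild v h'
  · by_cases htwo : ∃ h₁ h₂ : V, N.arc v h₁ ∧ N.arc v h₂ ∧ h₁ ≠ h₂
    · obtain ⟨h₁, h₂, ha1, ha2, hne⟩ := htwo
      obtain ⟨w₁, W₁, hw1h, hw1v, hWrc1, hvW1⟩ := hall h₁ ha1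
      obtain ⟨c₁, hc₁, hm₁⟩ := N.interm_of_avoid ha1 hw1h hw1v hWrc1 hvW1 (hchild _ ha1)
      obtain ⟨w₂, W₂, hw2h, hw2v, hWrc2, hvW2⟩ := hall h₂ ha2
      obtain ⟨c₂, hc₂, hm₂⟩ := N.interm_of_avoid ha2 hw2h hw2v hWrc2 hvW2 (hchild _ ha2)
      exact h1n c₁ c₂ (by rw [hc₁, hc₂]; exact hne) v hm₁ hm₂
    · push_neg at htwo
      have hvhyb : N.IsHybrid v := by
        by_contra htree
        exact hout v htree ⟨c₀, hc₀, fun y hy => htwo y c₀ hy hc₀⟩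
      obtain ⟨a, b, hab, ha, hb⟩ := hvhyb
      obtain ⟨w, Wπ, hwh, hwv, hπrc, hvπ⟩ := hall c₀ hc₀
      by_cases hα : ∃ t, N.arc t v ∧ t ∉ Wπ
      · obtain ⟨t, htv, htπ⟩ := hα
        obtain ⟨c₁, hc₁, hm₁⟩ := N.interm_parent hc₀ hwh hwv hc₀hyb hπrc hvπ htv htπ
        have ht' : ∃ t', N.arc t' v ∧ t ≠ t' := by
          by_cases h1 : t = a
          · exact ⟨b, hb, h1 ▸ hab⟩
          · exact ⟨a, ha, h1⟩
        obtain ⟨t', ht'v, htt'⟩ := ht'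
        obtain ⟨ρt, hρne, hρch, hρhd, hρl⟩ := N.rtg_chain (N.rooted t)
        by_cases hσ : ∃ σ, N.RootChainTo σ t' ∧ t ∉ σ
        · obtain ⟨σ, hσrc, htσ⟩ := hσ
          obtain ⟨c₂, hc₂, hmemR, -⟩ := N.core_s7 hρne hρch hσrc.1 hσrc.2.1
            (hρhd.trans hσrc.2.2.1.symm) hρl hσrc.2.2.2 htt' htv ht'v ⟨a, b, hab, ha, hb⟩
          obtain ⟨B, hB⟩ := EvoNet.eq_append_last hρl
          have hm₂ : t ∈ c₂.intermNodes := hmemR t B [] (by simpa using hB)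
            (by intro y hy; simp only [List.mem_singleton] at hy; subst hy; exact htσ)
          exact h1n c₁ c₂ (by rw [hc₁, hc₂]; exact hc₀v) t hm₁ hm₂
        · push_neg at hσ
          obtain ⟨ρt', hρ'⟩ := N.rootChainTo_exists t'
          have htρ' : t ∈ ρt' := hσ ρt' hρ'
          have htg : Relation.TransGen N.arc t t' := by
            obtain ⟨B, S, hdec⟩ := List.append_of_mem htρ'
            have hch := N.chain'_mid hρ'.2.1 hdec
            have hl : (t :: S).getLast? = some t' := by
              have := hρ'.2.2.2
              rwa [hdec, List.getLast?_append_cons] at this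
            have hrtg := N.chain'_cons_rtg hch hl
            rcases (Relation.reflTransGen_iff_eq_or_transGen.mp hrtg) with h1 | h1
            · exact absurd h1.symm htt'
            · exact h1
          by_cases ht'π : t' ∈ Wπ
          · obtain ⟨B', S', hπdec⟩ := List.append_of_mem ht'π
            have hrc : N.RootChainTo (B' ++ [t']) t' := by
              refine ⟨by simp, ?_, ?_, by simp⟩
              · have : Wπ = (B' ++ [t']) ++ S' := by simp [hπdec]
                exact (List.isChain_append.mp (this ▸ hπrc.2.1)).1
              · have h1 : (B' ++ [t']).head? = Wπ.head? := by
                  rw [hπdec]; cases B' <;> simp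
                rw [h1]; exact hπrc.2.2.1
            have htmem := hσ _ hrc
            rcases List.mem_append.mp htmem with h1 | h1
            · exact htπ (hπdec ▸ List.mem_append_left _ h1)
            · simp only [List.mem_singleton] at h1
              subst h1
              exact htπ ht'π
          · obtain ⟨c₁', hc₁', hm₁'⟩ := N.interm_parent hc₀ hwh hwv hc₀hyb hπrc hvπ ht'v ht'π
            have ht'ρt : t' ∉ ρt := by
              intro hmem
              obtain ⟨B, S, hdec⟩ := List.append_of_mem hmem
              have hch := N.chain'_mid hρch hdec
              have hl : (t' :: S).getLast? = some t := by
                have := hρl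
                rwa [hdec, List.getLast?_append_cons] at this
              have hrtg := N.chain'_cons_rtg hch hl
              exact N.acyclic t (Relation.TransGen.trans_left htg hrtg)
            obtain ⟨c₂, hc₂, hmemR, -⟩ := N.core_s7 hρ'.1 hρ'.2.1 hρne hρch
              (hρ'.2.2.1.trans hρhd.symm) hρ'.2.2.2 hρl (Ne.symm htt') ht'v htv
              ⟨a, b, hab, ha, hb⟩
            obtain ⟨B, hB⟩ := EvoNet.eq_append_last hρ'.2.2.2
            have hm₂ : t' ∈ c₂.intermNodes := hmemR t' B [] (by simpa using hB)
              (by intro y hy; simp only [List.mem_singleton] at hy; subst hy; exact ht'ρt)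
            exact h1n c₁' c₂ (by rw [hc₁', hc₂]; exact hc₀v) t' hm₁' hm₂
      · push_neg at hα
        obtain ⟨P₁, t1, Q₁, t2, Q₂, hπeq, ht1v, ht2v, ht12⟩ : ∃ P₁ t1 Q₁ t2 Q₂,
            Wπ = P₁ ++ t1 :: (Q₁ ++ t2 :: Q₂) ∧ N.arc t1 v ∧ N.arc t2 v ∧ t1 ≠ t2 := by
          obtain ⟨A, S, hdec⟩ := List.append_of_mem (hα a ha)
          have hbπ := hα b hb
          rw [hdec] at hbπ
          rcases List.mem_append.mp hbπ with hbA | hbS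
          · obtain ⟨A₁, A₂, rfl⟩ := List.append_of_mem hbA
            exact ⟨A₁, b, A₂, a, S, by simp [hdec], hb, ha, fun e => hab e.symm⟩
          · rcases List.mem_cons.mp hbS with rfl | hbS'
            · exact absurd rfl hab
            · obtain ⟨S₁, S₂, rfl⟩ := List.append_of_mem hbS'
              exact ⟨A, a, S₁, b, S₂, by simp [hdec], ha, hb, hab⟩
        have hπch := hπrc.2.1
        -- cycle for v with t2 intermediate
        have hWmidch : (t1 :: (Q₁ ++ [t2])).Chain' N.arc := by
          have h1 : Wπ = (P₁ ++ (t1 :: (Q₁ ++ [t2]))) ++ Q₂ := by simp [hπeq]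
          exact (List.isChain_append.mp ((List.isChain_append.mp (h1 ▸ hπch)).1)).2.1
        obtain ⟨c₂, hc₂, -, hmemW⟩ := N.core_s7 (R := [t1]) (W := t1 :: (Q₁ ++ [t2]))
          (by simp) (List.isChain_singleton _) (by simp) hWmidch rfl rfl
          (by have := List.getLast?_append_cons (t1 :: Q₁) t2 ([] : List V); simpa using this)
          ht12 ht1v ht2v ⟨a, b, hab, ha, hb⟩
        have hm₂ : t2 ∈ c₂.intermNodes := by
          refine hmemW t2 (t1 :: Q₁) [] (by simp) ?_
          intro y hy
          simp only [List.mem_cons, List.not_mem_nil, or_false] at hy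
          subst hy
          simp only [List.mem_singleton]
          exact Ne.symm ht12
        -- cycle for c₀ with t2 intermediate
        have hRt1ch : ((P₁ ++ [t1]) ++ [v]).Chain' N.arc := by
          have h1 : (P₁ ++ [t1]).Chain' N.arc := by
            have h2 : Wπ = (P₁ ++ [t1]) ++ (Q₁ ++ t2 :: Q₂) := by simp [hπeq]
            exact (List.isChain_append.mp (h2 ▸ hπch)).1
          rw [List.Chain', List.isChain_append]
          refine ⟨h1, List.isChain_singleton _, ?_⟩
          intro x hx y hy
          rw [show (P₁ ++ [t1]).getLast? = some t1 by simp] at hx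
          simp only [List.head?_cons, Option.mem_def, Option.some.injEq] at hx hy
          subst hx; subst hy; exact ht1v
        obtain ⟨c₁, hc₁, -, hmemW⟩ := N.core_s7 (R := (P₁ ++ [t1]) ++ [v]) (W := Wπ)
          (by simp) hRt1ch hπrc.1 hπch
          (by rw [EvoNet.head?_append_left (by simp : P₁ ++ [t1] ≠ []), hπeq]
              cases P₁ <;> simp)
          (by simp) hπrc.2.2.2 (Ne.symm hwv) hc₀ hwh hc₀hyb
        have hm₁ : t2 ∈ c₁.intermNodes := by
          refine hmemW t2 (P₁ ++ t1 :: Q₁) Q₂ (by simp [hπeq]) ?_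
          intro y hy hyR
          rcases List.mem_append.mp hyR with hy1 | hy2
          · exact N.no_revisit hπch (by simp [hπeq] : Wπ = (P₁ ++ t1 :: Q₁) ++ t2 :: Q₂)
              (by rcases List.mem_append.mp hy1 with h1 | h1
                  · exact List.mem_append_left _ h1
                  · simp only [List.mem_singleton] at h1
                    subst h1
                    exact List.mem_append_right _ (List.mem_cons_self)) hy
          · simp only [List.mem_singleton] at hy2
            subst hy2
            refine hvπ ?_
            rw [hπeq]
            exact List.mem_append_right _ (List.mem_cons_of_mem _ (List.mem_append_right _ hy))
        exact h1n c₁ c₂ (by rw [hc₁, hc₂]; exact hc₀v) t2 hm₁ hm₂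
  · push_neg at hall
    obtain ⟨h0, hvh0, hng0⟩ := hall
    obtain ⟨w, x, K', hwh, hwv, hchK, hlK, hvx, hxh, hvK⟩ := N.ng hvh0 (hchild _ hvh0) hng0
    have hxhyb := hchild x hvx
    by_cases hgx : N.GoodChild v x
    · obtain ⟨wx, Wx, hwxx, hwxv, hWxrc, hvWx⟩ := hgx
      obtain ⟨c₁, hc₁, hm₁⟩ := N.interm_of_avoid hvx hwxx hwxv hWxrc hvWx hxhyb
      have hW' : N.RootChainTo (Wx ++ x :: K') w := by
        refine ⟨by simp, ?_, ?_, by rw [List.getLast?_append_cons]; exact hlK⟩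
        · rw [List.Chain', List.isChain_append]
          refine ⟨hWxrc.2.1, (List.isChain_cons_cons.mp hchK).2, ?_⟩
          intro p hp q hq
          rw [hWxrc.2.2.2] at hp
          simp only [Option.mem_def, Option.some.injEq, List.head?_cons] at hp hq
          subst hp; subst hq; exact hwxx
        · rw [EvoNet.head?_append_left hWxrc.1]; exact hWxrc.2.2.1
      have hvW' : v ∉ Wx ++ x :: K' := by
        intro hm
        rcases List.mem_append.mp hm with h1 | h1
        · exact hvWx h1
        · exact hvK h1
      obtain ⟨c₂, hc₂, hm₂⟩ := N.interm_of_avoid hvh0 hwh hwv hW' hvW' (hchild _ hvh0)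
      exact h1n c₁ c₂ (by rw [hc₁, hc₂]; exact hxh) v hm₁ hm₂
    · obtain ⟨wx, y, Kx', hwxx, hwxv, hchKx, hlKx, hvy, hyx, hvKx⟩ :=
        N.ng hvx hxhyb hgx
      obtain ⟨c₁, hc₁, -, hmemW⟩ := N.core_s7 (R := [v]) (W := v :: y :: Kx')
        (by simp) (List.isChain_singleton _) (by simp) hchKx rfl rfl
        (by rw [show v :: y :: Kx' = [v] ++ y :: Kx' from rfl, List.getLast?_append_cons]
            exact hlKx)
        (Ne.symm hwxv) hvx hwxx hxhyb
      have hm₁ : y ∈ c₁.intermNodes := by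
        refine hmemW y [v] Kx' rfl ?_
        intro z hz
        simp only [List.mem_singleton]
        intro h1
        subst h1
        exact hvKx hz
      have hWbig : (v :: (y :: Kx' ++ x :: K')).Chain' N.arc := by
        rw [show v :: (y :: Kx' ++ x :: K') = (v :: y :: Kx') ++ x :: K' from rfl,
          List.Chain', List.isChain_append]
        refine ⟨hchKx, (List.isChain_cons_cons.mp hchK).2, ?_⟩
        intro p hp q hq
        have hl2 : (v :: y :: Kx').getLast? = some wx := by
          rw [show v :: y :: Kx' = [v] ++ y :: Kx' from rfl, List.getLast?_append_cons]
          exact hlKx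
        rw [hl2] at hp
        simp only [Option.mem_def, Option.some.injEq, List.head?_cons] at hp hq
        subst hp; subst hq; exact hwxx
      obtain ⟨c₂, hc₂, -, hmemW'⟩ := N.core_s7 (R := [v]) (W := v :: (y :: Kx' ++ x :: K'))
        (by simp) (List.isChain_singleton _) (by simp) hWbig rfl rfl
        (by rw [show v :: (y :: Kx' ++ x :: K') = (v :: y :: Kx') ++ x :: K' from rfl,
              List.getLast?_append_cons]
            exact hlK)
        (Ne.symm hwv) hvh0 hwh (hchild _ hvh0)
      have hm₂ : y ∈ c₂.intermNodes := by
        refine hmemW' y [v] (Kx' ++ x :: K') rfl ?_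
        intro z hz
        simp only [List.mem_singleton]
        intro h1
        subst h1
        rcases List.mem_cons.mp hz with h2 | h2
        · exact hvKx (h2 ▸ List.mem_cons_self)
        · rcases List.mem_append.mp h2 with h3 | h3
          · exact hvKx (List.mem_cons_of_mem _ h3)
          · exact hvK h3
      exact h1n c₁ c₂ (by rw [hc₁, hc₂]; exact hxh) y hm₁ hm₂
end
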